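/- arXiv:1603.09464 — 6 statements merged into one kernel-verified Lean document; each statement's English description precedes it below -/
import Mathlib

section
/- Let λ₀ > 0. There exists a constant C > 0 depending only on α, β, γ, λ₀ with the following property: for every ξ ∈ ℝⁿ with |ξ| ≥ λ₀ and every pair of differentiable functions r : [0,∞) → ℂ, w : [0,∞) → ℂⁿ satisfying r'(t) + iγ ξ·w(t) = 0 and w'(t) + α|ξ|² w(t) + β ξ (ξ·w(t)) + iγ ξ r(t) = 0 for all t > 0, one has ∫_S^T ( |w(t)|² + |r(t)|² ) dt ≤ C ( |w(S)|² + |r(S)|² ) for all 0 < S < T. -/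
set_option maxHeartbeats 1000000

open MeasureTheory Real Filter

noncomputable section

abbrev Esp (n : ℕ) := EuclideanSpace ℝ (Fin n)

/-- "dot product" `ξ·w := Σⱼ ξⱼ wⱼ` (no conjugation) of a real frequency with a complex vector. -/
def cdot {n : ℕ} (ξ : Esp n) (w : Fin n → ℂ) : ℂ := ∑ j, (ξ j : ℂ) * w j

/-! ### Auxiliary lemmas -/

lemma hasDerivAt_normSq' {f : ℝ → ℂ} {f' : ℂ} {t : ℝ} (hf : HasDerivAt f f' t) :
    HasDerivAt (fun s => ‖f s‖ ^ 2) (2 * ((starRingEnd ℂ) (f t) * f').re) t := by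
  have hmul := hf.star.mul hf
  have hre := Complex.reCLM.hasFDerivAt.comp_hasDerivAt t hmul
  have heq : (fun s => ‖f s‖ ^ 2) = fun s => Complex.reCLM (star (f s) * f s) := by
    funext s
    simp [← Complex.normSq_eq_norm_sq, Complex.normSq_apply,
      Complex.mul_re, Complex.star_def]
  rw [heq]
  refine hre.congr_deriv (Eq.symm ?_)
  simp [Complex.mul_re, Complex.star_def]
  ring

lemma sum_sq_eq {n : ℕ} (ξ : Esp n) : ∑ j, (ξ j)^2 = ‖ξ‖^2 := by
  rw [EuclideanSpace.norm_eq, Real.sq_sqrt (by positivity)]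
  simp [Real.norm_eq_abs, sq_abs]

lemma neg_le_of_sq_le_sq {p q : ℝ} (hq : 0 ≤ q) (h : p^2 ≤ q^2) : -q ≤ p := by
  nlinarith [sq_nonneg (q+p)]

lemma le_of_sq_le_sq' {p q : ℝ} (hq : 0 ≤ q) (h : p^2 ≤ q^2) : p ≤ q := by
  nlinarith [sq_nonneg (q-p)]

lemma cdot_sq_le {n : ℕ} (ξ : Esp n) (v : Fin n → ℂ) :
    ‖cdot ξ v‖^2 ≤ ‖ξ‖^2 * ∑ j, ‖v j‖^2 := by
  have h1 : ‖cdot ξ v‖ ≤ ∑ j, |ξ j| * ‖v j‖ := by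
    refine (norm_sum_le _ _).trans ?_
    refine Finset.sum_le_sum fun j _ => ?_
    rw [norm_mul]
    simp [Complex.norm_real]
  have h2 := Finset.sum_mul_sq_le_sq_mul_sq Finset.univ (fun j => |ξ j|) (fun j => ‖v j‖)
  have h3 : (∑ j, |ξ j|^2) = ‖ξ‖^2 := by rw [← sum_sq_eq ξ]; simp [sq_abs]
  calc ‖cdot ξ v‖^2 ≤ (∑ j, |ξ j| * ‖v j‖)^2 := by
        exact pow_le_pow_left₀ (norm_nonneg _) h1 2
    _ ≤ (∑ j, |ξ j|^2) * ∑ j, ‖v j‖^2 := h2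
    _ = ‖ξ‖^2 * ∑ j, ‖v j‖^2 := by rw [h3]

lemma im_mul_sq_le (r z : ℂ) : ((starRingEnd ℂ) r * z).im ^ 2 ≤ ‖r‖^2 * ‖z‖^2 := by
  have h1 := Complex.abs_im_le_norm ((starRingEnd ℂ) r * z)
  have h2 : ‖(starRingEnd ℂ) r * z‖ = ‖r‖ * ‖z‖ := by
    simp
  rw [h2] at h1
  calc ((starRingEnd ℂ) r * z).im ^ 2 = |((starRingEnd ℂ) r * z).im| ^ 2 := (sq_abs _).symm
    _ ≤ (‖r‖ * ‖z‖)^2 := pow_le_pow_left₀ (abs_nonneg _) h1 2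
    _ = ‖r‖^2 * ‖z‖^2 := by ring

lemma comp_ineq (lam0 l ε D W R Z P : ℝ) (hlam0 : 0 < lam0) (hl : lam0 ≤ l)
    (hW : 0 ≤ W) (hR : 0 ≤ R) (hZW : Z ≤ l^2*W) (hP : P^2 ≤ R*Z)
    (hε0 : 0 < ε) (hεlam : ε ≤ lam0) (hD0 : 0 ≤ D) (hD : D*l^2 = ε) :
    -((W+R)/2) ≤ D*P ∧ D*P ≤ (W+R)/2 := by
  have hl0 : 0 < l := lt_of_lt_of_le hlam0 hl
  have hPRW : P^2 ≤ R*(l^2*W) := le_trans hP (mul_le_mul_of_nonneg_left hZW hR)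
  have hDε : D*ε ≤ 1 := by
    have h1 : D*ε*l^2 = ε^2 := by rw [← hD]; ring
    have h2 : ε^2 ≤ 1*l^2 := by nlinarith
    have := h1.trans_le h2
    exact le_of_mul_le_mul_right this (by positivity)
  have hq0 : (0:ℝ) ≤ (W+R)/2 := by linarith
  have hsq : (D*P)^2 ≤ ((W+R)/2)^2 := by
    have e1 : D^2*(R*(l^2*W)) = (D*ε)*(W*R) := by rw [← hD]; ring
    have s1 : (D*P)^2 ≤ D^2*(R*(l^2*W)) := by
      nlinarith [mul_le_mul_of_nonneg_left hPRW (sq_nonneg D)]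
    have s2 : (D*ε)*(W*R) ≤ 1*(W*R) :=
      mul_le_mul_of_nonneg_right hDε (mul_nonneg hW hR)
    nlinarith [s1, s2, e1, sq_nonneg (W-R)]
  exact ⟨neg_le_of_sq_le_sq hq0 hsq, le_of_sq_le_sq' hq0 hsq⟩

lemma key_ineq (α β γ lam0 l ε D c W R Z P : ℝ)
    (hα : 0 < α) (hβ : 0 ≤ β) (hγ : 0 < γ) (hlam0 : 0 < lam0) (hl : lam0 ≤ l)
    (hW : 0 ≤ W) (hR : 0 ≤ R) (hZ : 0 ≤ Z) (hZW : Z ≤ l^2*W) (hP : P^2 ≤ R*Z)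
    (hε0 : 0 < ε) (hD0 : 0 ≤ D) (hD : D*l^2 = ε)
    (hε2 : ε*γ ≤ α/2*lam0^2) (hε3 : ε*(α+β)^2 ≤ α*γ)
    (hc1 : c ≤ α*lam0^2) (hc2 : c ≤ ε*γ/2) :
    -(2*α*l^2*W + 2*β*Z) + D*(γ*Z - (α+β)*l^2*P - γ*l^2*R) ≤ -c*(W+R) := by
  have hl0 : 0 < l := lt_of_lt_of_le hlam0 hl
  have hll : lam0^2 ≤ l^2 := by nlinarith
  have key : -(2*α*l^2*W + 2*β*Z) + D*(γ*Z - (α+β)*l^2*P - γ*l^2*R)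
      = -(2*α*l^2*W + 2*β*Z) + D*(γ*Z) - ε*((α+β)*P) - ε*(γ*R) := by
    rw [← hD]; ring
  rw [key]
  have h1 : D*(γ*Z) ≤ ε*(γ*W) := by
    have h := mul_le_mul_of_nonneg_left hZW (mul_nonneg hD0 hγ.le)
    have hD' : D*γ*(l^2*W) = ε*(γ*W) := by rw [← hD]; ring
    linarith [h, hD'.le, hD'.ge]
  have hPRW : P^2 ≤ R*(l^2*W) := le_trans hP (mul_le_mul_of_nonneg_left hZW hR)
  have hq0 : 0 ≤ γ^2*R + (α+β)^2*l^2*W := by positivity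
  have hsq : (2*γ*(α+β)*P)^2 ≤ (γ^2*R + (α+β)^2*l^2*W)^2 := by
    nlinarith [sq_nonneg (γ^2*R - (α+β)^2*l^2*W),
      mul_nonneg (mul_nonneg (by positivity : (0:ℝ) ≤ 4*γ^2) (sq_nonneg (α+β)))
        (sub_nonneg.mpr hPRW)]
  have h2 := neg_le_of_sq_le_sq hq0 hsq
  have f2 := mul_le_mul_of_nonneg_left h2 hε0.le
  have f3 : ε*(α+β)^2*(l^2*W) ≤ α*γ*(l^2*W) :=
    mul_le_mul_of_nonneg_right hε3 (by positivity)
  have h4 : ε*(γ*W) ≤ α/2*(l^2*W) := by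
    have h5 : ε*γ ≤ α/2*l^2 :=
      le_trans hε2 (by nlinarith [mul_le_mul_of_nonneg_left hll (by linarith : (0:ℝ) ≤ α/2)])
    have := mul_le_mul_of_nonneg_right h5 hW
    linarith [this]
  have hc1W : c*W ≤ α*(l^2*W) := by
    have h6 : c ≤ α*l^2 := le_trans hc1 (by nlinarith [mul_le_mul_of_nonneg_left hll hα.le])
    have := mul_le_mul_of_nonneg_right h6 hW
    linarith [this]
  have hc2R : c*R ≤ ε*γ/2*R := mul_le_mul_of_nonneg_right hc2 hR
  have f1 := mul_le_mul_of_nonneg_left h1 hγ.le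
  have f4 := mul_le_mul_of_nonneg_left h4 hγ.le
  have fc1 := mul_le_mul_of_nonneg_left hc1W hγ.le
  have fc2 := mul_le_mul_of_nonneg_left hc2R hγ.le
  have fβZ : 0 ≤ γ*(β*Z) := mul_nonneg hγ.le (mul_nonneg hβ hZ)
  have gmain : γ * ((-(2*α*l^2*W + 2*β*Z)) + D*(γ*Z) - ε*((α+β)*P) - ε*(γ*R))
      ≤ γ * (-c*(W+R)) := by nlinarith [f1, f2, f3, f4, fc1, fc2, fβZ]
  exact le_of_mul_le_mul_left gmain hγ

section Derivs
variable {n : ℕ} (ξ : Esp n) (α β γ : ℝ) (r : ℝ → ℂ) (w : ℝ → Fin n → ℂ) (t : ℝ)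

lemma star_cdot (v : Fin n → ℂ) :
    (starRingEnd ℂ) (cdot ξ v) = ∑ j, (ξ j : ℂ) * (starRingEnd ℂ) (v j) := by
  simp [cdot, map_sum]

lemma sum_conj_mul_self (v : Fin n → ℂ) :
    ∑ j, (starRingEnd ℂ) (v j) * v j = ((∑ j, ‖v j‖ ^ 2 : ℝ) : ℂ) := by
  push_cast
  exact Finset.sum_congr rfl fun j _ => by simp [Complex.conj_mul']

lemma derivE
    (hr' : HasDerivAt r (-(Complex.I * (γ : ℂ) * cdot ξ (w t))) t)
    (hw' : ∀ j, HasDerivAt (fun s => w s j)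
          (-((α : ℂ) * ((‖ξ‖ ^ 2 : ℝ) : ℂ) * w t j
             + (β : ℂ) * (ξ j : ℂ) * cdot ξ (w t)
             + Complex.I * (γ : ℂ) * (ξ j : ℂ) * r t)) t) :
    HasDerivAt (fun s => (∑ j, ‖w s j‖ ^ 2) + ‖r s‖ ^ 2)
      (-(2*α*‖ξ‖^2*(∑ j, ‖w t j‖^2) + 2*β*‖cdot ξ (w t)‖^2)) t := by
  have hW : HasDerivAt (fun s => ∑ j, ‖w s j‖ ^ 2)
      (∑ j, 2 * ((starRingEnd ℂ) (w t j) *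
        (-((α : ℂ) * ((‖ξ‖ ^ 2 : ℝ) : ℂ) * w t j
             + (β : ℂ) * (ξ j : ℂ) * cdot ξ (w t)
             + Complex.I * (γ : ℂ) * (ξ j : ℂ) * r t))).re) t :=
    HasDerivAt.fun_sum fun j _ => hasDerivAt_normSq' (hw' j)
  have hR : HasDerivAt (fun s => ‖r s‖ ^ 2)
      (2 * ((starRingEnd ℂ) (r t) * (-(Complex.I * (γ : ℂ) * cdot ξ (w t)))).re) t :=
    hasDerivAt_normSq' hr'
  have h := hW.add hR
  refine h.congr_deriv (Eq.symm ?_)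
  set z := cdot ξ (w t) with hz
  have hsum : ∑ j, (starRingEnd ℂ) (w t j) *
        (-((α : ℂ) * ((‖ξ‖ ^ 2 : ℝ) : ℂ) * w t j
             + (β : ℂ) * (ξ j : ℂ) * z
             + Complex.I * (γ : ℂ) * (ξ j : ℂ) * r t))
      = -((α : ℂ) * ((‖ξ‖ ^ 2 : ℝ) : ℂ) * ((∑ j, ‖w t j‖ ^ 2 : ℝ) : ℂ)
          + ((β : ℂ) * z + Complex.I * (γ : ℂ) * r t) * (starRingEnd ℂ) z) := by
    have e1 : ∀ j, (starRingEnd ℂ) (w t j) *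
        (-((α : ℂ) * ((‖ξ‖ ^ 2 : ℝ) : ℂ) * w t j
             + (β : ℂ) * (ξ j : ℂ) * z
             + Complex.I * (γ : ℂ) * (ξ j : ℂ) * r t))
        = (-((α : ℂ) * ((‖ξ‖ ^ 2 : ℝ) : ℂ))) * ((starRingEnd ℂ) (w t j) * w t j)
          + (-((β : ℂ) * z + Complex.I * (γ : ℂ) * r t)) * ((ξ j : ℂ) * (starRingEnd ℂ) (w t j)) :=
      fun j => by ring
    rw [Finset.sum_congr rfl fun j _ => e1 j, Finset.sum_add_distrib,
      ← Finset.mul_sum, ← Finset.mul_sum, sum_conj_mul_self, ← star_cdot, ← hz]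
    ring
  rw [← Finset.mul_sum, ← Complex.re_sum, hsum]
  have habs : ‖z‖^2 = ((starRingEnd ℂ) z * z).re := by
    rw [Complex.conj_mul']; norm_cast
  rw [habs]
  simp [Complex.mul_re, Complex.add_re, Complex.mul_im, Complex.I_re, Complex.I_im,
    ← Complex.ofReal_pow, Complex.ofReal_re, Complex.ofReal_im, Complex.conj_re, Complex.conj_im]
  ring

lemma derivz
    (hw' : ∀ j, HasDerivAt (fun s => w s j)
          (-((α : ℂ) * ((‖ξ‖ ^ 2 : ℝ) : ℂ) * w t j
             + (β : ℂ) * (ξ j : ℂ) * cdot ξ (w t)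
             + Complex.I * (γ : ℂ) * (ξ j : ℂ) * r t)) t) :
    HasDerivAt (fun s => cdot ξ (w s))
      (-(((α + β : ℝ) : ℂ) * ((‖ξ‖ ^ 2 : ℝ) : ℂ) * cdot ξ (w t)
        + Complex.I * (γ : ℂ) * ((‖ξ‖ ^ 2 : ℝ) : ℂ) * r t)) t := by
  have h := HasDerivAt.fun_sum (fun j (_ : j ∈ Finset.univ) => ((hw' j).const_mul ((ξ j : ℂ))))
  have heq : (fun s => ∑ j, (ξ j : ℂ) * w s j) = fun s => cdot ξ (w s) := by
    funext s; rfl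
  rw [heq] at h
  refine h.congr_deriv (Eq.symm ?_)
  have hsqc : ∑ j, ((ξ j : ℂ))^2 = ((‖ξ‖^2 : ℝ) : ℂ) := by
    rw [← sum_sq_eq ξ]; push_cast; ring
  have e1 : ∀ j, (ξ j : ℂ) * (-((α : ℂ) * ((‖ξ‖ ^ 2 : ℝ) : ℂ) * w t j
             + (β : ℂ) * (ξ j : ℂ) * cdot ξ (w t)
             + Complex.I * (γ : ℂ) * (ξ j : ℂ) * r t))
      = (-((α : ℂ) * ((‖ξ‖ ^ 2 : ℝ) : ℂ))) * ((ξ j : ℂ) * w t j)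
        + (-((β : ℂ) * cdot ξ (w t) + Complex.I * (γ : ℂ) * r t)) * ((ξ j : ℂ))^2 :=
    fun j => by ring
  rw [Finset.sum_congr rfl fun j _ => e1 j, Finset.sum_add_distrib,
    ← Finset.mul_sum, ← Finset.mul_sum, hsqc]
  show _ = _ * cdot ξ (w t) + _
  push_cast
  ring

lemma derivG
    (hr' : HasDerivAt r (-(Complex.I * (γ : ℂ) * cdot ξ (w t))) t)
    (hw' : ∀ j, HasDerivAt (fun s => w s j)
          (-((α : ℂ) * ((‖ξ‖ ^ 2 : ℝ) : ℂ) * w t j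
             + (β : ℂ) * (ξ j : ℂ) * cdot ξ (w t)
             + Complex.I * (γ : ℂ) * (ξ j : ℂ) * r t)) t) :
    HasDerivAt (fun s => ((starRingEnd ℂ) (r s) * cdot ξ (w s)).im)
      (γ*‖cdot ξ (w t)‖^2
        - (α+β)*‖ξ‖^2*((starRingEnd ℂ) (r t) * cdot ξ (w t)).im
        - γ*‖ξ‖^2*‖r t‖^2) t := by
  have hz' := derivz ξ α β γ r w t hw'
  have hmul := hr'.star.mul hz'
  have him := Complex.imCLM.hasFDerivAt.comp_hasDerivAt t hmul
  have heq : (fun s => ((starRingEnd ℂ) (r s) * cdot ξ (w s)).im)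
      = fun s => Complex.imCLM (star (r s) * cdot ξ (w s)) := by
    funext s; simp [Complex.star_def]
  rw [heq]
  refine him.congr_deriv (Eq.symm ?_)
  set z := cdot ξ (w t)
  simp only [Complex.star_def, map_neg, map_mul, Complex.conj_I, Complex.conj_ofReal,
    Complex.imCLM_apply]
  simp [Complex.mul_im, Complex.mul_re, Complex.add_re, Complex.add_im,
    Complex.I_re, Complex.I_im, ← Complex.ofReal_pow, Complex.ofReal_re, Complex.ofReal_im,
    Complex.conj_re, Complex.conj_im, ← Complex.normSq_eq_norm_sq,
    Complex.normSq_apply]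
  ring
end Derivs

theorem stmt8
    (n : ℕ) (hn : 2 ≤ n) (α β γ : ℝ) (hα : 0 < α) (hβ : 0 ≤ β) (hγ : 0 < γ)
    (lam0 : ℝ) (hlam0 : 0 < lam0) :
    ∃ C > (0 : ℝ), ∀ ξ : Esp n, lam0 ≤ ‖ξ‖ →
      ∀ (r : ℝ → ℂ) (w : ℝ → Fin n → ℂ),
        (∀ t : ℝ, 0 < t →
          HasDerivAt r (-(Complex.I * (γ : ℂ) * cdot ξ (w t))) t) →
        (∀ t : ℝ, 0 < t → ∀ j, HasDerivAt (fun s => w s j)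
          (-((α : ℂ) * ((‖ξ‖ ^ 2 : ℝ) : ℂ) * w t j
             + (β : ℂ) * (ξ j : ℂ) * cdot ξ (w t)
             + Complex.I * (γ : ℂ) * (ξ j : ℂ) * r t)) t) →
        ∀ S T : ℝ, 0 < S → S < T →
          (∫ t in S..T, ((∑ j, ‖w t j‖ ^ 2) + ‖r t‖ ^ 2))
            ≤ C * ((∑ j, ‖w S j‖ ^ 2) + ‖r S‖ ^ 2) := by
  have hαβ : 0 < α + β := by linarith
  set ε : ℝ := min lam0 (min (α*lam0^2/(2*γ)) (α*γ/(α+β)^2)) with hεdef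
  have hε0 : 0 < ε := by
    apply lt_min hlam0
    apply lt_min
    · positivity
    · positivity
  have hεlam : ε ≤ lam0 := min_le_left _ _
  have hε2 : ε*γ ≤ α/2*lam0^2 := by
    have h : ε ≤ α*lam0^2/(2*γ) := le_trans (min_le_right _ _) (min_le_left _ _)
    rw [le_div_iff₀ (by positivity)] at h
    linarith
  have hε3 : ε*(α+β)^2 ≤ α*γ := by
    have h : ε ≤ α*γ/(α+β)^2 := le_trans (min_le_right _ _) (min_le_right _ _)
    rw [le_div_iff₀ (by positivity)] at h
    linarith
  set c : ℝ := min (α*lam0^2) (ε*γ/2) with hcdef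
  have hc0 : 0 < c := lt_min (by positivity) (by positivity)
  have hc1 : c ≤ α*lam0^2 := min_le_left _ _
  have hc2 : c ≤ ε*γ/2 := min_le_right _ _
  clear_value ε c
  refine ⟨3/(2*c), by positivity, ?_⟩
  intro ξ hξ r w hr hw S T hS hST
  have hl0 : (0:ℝ) < ‖ξ‖ := lt_of_lt_of_le hlam0 hξ
  set D : ℝ := ε / ‖ξ‖^2 with hDdef
  have hD0 : 0 ≤ D := by positivity
  have hD : D * ‖ξ‖^2 = ε := div_mul_cancel₀ _ (by positivity)
  clear_value D
  -- the functionals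
  set E : ℝ → ℝ := fun s => (∑ j, ‖w s j‖ ^ 2) + ‖r s‖ ^ 2 with hEdef
  set G : ℝ → ℝ := fun s => ((starRingEnd ℂ) (r s) * cdot ξ (w s)).im with hGdef
  set L : ℝ → ℝ := fun s => E s + D * G s with hLdef
  clear_value L
  clear_value E G
  have hE0 : ∀ s, 0 ≤ E s := fun s => by
    simp only [hEdef]
    positivity
  -- derivatives
  have hEd : ∀ t ∈ Set.Ioi (0:ℝ), HasDerivAt E
      (-(2*α*‖ξ‖^2*(∑ j, ‖w t j‖^2) + 2*β*‖cdot ξ (w t)‖^2)) t := by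
    intro t ht
    rw [hEdef]
    exact derivE ξ α β γ r w t (hr t ht) (hw t ht)
  have hGd : ∀ t ∈ Set.Ioi (0:ℝ), HasDerivAt G
      (γ*‖cdot ξ (w t)‖^2
        - (α+β)*‖ξ‖^2*((starRingEnd ℂ) (r t) * cdot ξ (w t)).im
        - γ*‖ξ‖^2*‖r t‖^2) t := by
    intro t ht
    rw [hGdef]
    exact derivG ξ α β γ r w t (hr t ht) (hw t ht)
  have hLd : ∀ t ∈ Set.Ioi (0:ℝ), HasDerivAt L
      ((-(2*α*‖ξ‖^2*(∑ j, ‖w t j‖^2) + 2*β*‖cdot ξ (w t)‖^2))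
        + D * (γ*‖cdot ξ (w t)‖^2
          - (α+β)*‖ξ‖^2*((starRingEnd ℂ) (r t) * cdot ξ (w t)).im
          - γ*‖ξ‖^2*‖r t‖^2)) t := by
    intro t ht
    rw [hLdef]
    exact (hEd t ht).add ((hGd t ht).const_mul D)
  -- the pointwise dissipation bound
  have hLbound : ∀ t ∈ Set.Ioi (0:ℝ),
      (-(2*α*‖ξ‖^2*(∑ j, ‖w t j‖^2) + 2*β*‖cdot ξ (w t)‖^2))
        + D * (γ*‖cdot ξ (w t)‖^2
          - (α+β)*‖ξ‖^2*((starRingEnd ℂ) (r t) * cdot ξ (w t)).im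
          - γ*‖ξ‖^2*‖r t‖^2) ≤ -c * E t := by
    intro t _
    have := key_ineq α β γ lam0 ‖ξ‖ ε D c (∑ j, ‖w t j‖^2) (‖r t‖^2)
      (‖cdot ξ (w t)‖^2) (((starRingEnd ℂ) (r t) * cdot ξ (w t)).im)
      hα hβ hγ hlam0 hξ (by positivity) (by positivity) (by positivity)
      (cdot_sq_le ξ (w t)) (im_mul_sq_le (r t) (cdot ξ (w t)))
      hε0 hD0 hD hε2 hε3 hc1 hc2
    simpa [hEdef] using this
  -- continuity of E on (0, ∞)
  have hEcont : ContinuousOn E (Set.Ioi 0) :=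
    fun t ht => ((hEd t ht).continuousAt).continuousWithinAt
  have hIccsub : Set.Icc S T ⊆ Set.Ioi (0:ℝ) := fun x hx => lt_of_lt_of_le hS hx.1
  -- interval integrability
  have hInt : ∀ t ∈ Set.Icc S T, IntervalIntegrable E volume S t := by
    intro t ht
    apply ContinuousOn.intervalIntegrable
    apply hEcont.mono
    rw [Set.uIcc_of_le ht.1]
    exact fun x hx => lt_of_lt_of_le hS hx.1
  -- the monotone functional
  set F : ℝ → ℝ := fun s => c * (∫ u in S..s, E u) + L s with hFdef
  clear_value F
  have hFd : ∀ t ∈ Set.Icc S T, HasDerivAt F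
      (c * E t + ((-(2*α*‖ξ‖^2*(∑ j, ‖w t j‖^2) + 2*β*‖cdot ξ (w t)‖^2))
        + D * (γ*‖cdot ξ (w t)‖^2
          - (α+β)*‖ξ‖^2*((starRingEnd ℂ) (r t) * cdot ξ (w t)).im
          - γ*‖ξ‖^2*‖r t‖^2))) t := by
    intro t ht
    have ht0 : t ∈ Set.Ioi (0:ℝ) := hIccsub ht
    have hint := intervalIntegral.integral_hasDerivAt_right (hInt t ht)
      (hEcont.stronglyMeasurableAtFilter isOpen_Ioi t ht0)
      (hEcont.continuousAt (isOpen_Ioi.mem_nhds ht0))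
    rw [hFdef]
    exact (hint.const_mul c).add (hLd t ht0)
  have hFanti : AntitoneOn F (Set.Icc S T) := by
    apply antitoneOn_of_deriv_nonpos (convex_Icc S T)
    · exact fun t ht => ((hFd t ht).continuousAt).continuousWithinAt
    · intro t ht
      rw [interior_Icc] at ht
      exact ((hFd t (Set.mem_Icc_of_Ioo ht)).differentiableAt).differentiableWithinAt
    · intro t ht
      rw [interior_Icc] at ht
      rw [(hFd t (Set.mem_Icc_of_Ioo ht)).deriv]
      have hb := hLbound t (hIccsub (Set.mem_Icc_of_Ioo ht))
      have he := hE0 t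
      nlinarith [hb, he, hc0]
  have hFTS : F T ≤ F S :=
    hFanti (Set.left_mem_Icc.mpr hST.le) (Set.right_mem_Icc.mpr hST.le) hST.le
  have hFS : F S = L S := by
    simp only [hFdef, intervalIntegral.integral_same, mul_zero, zero_add]
  have hcomp : ∀ t : ℝ, -(E t/2) ≤ D * G t ∧ D * G t ≤ E t/2 := by
    intro t
    have h := comp_ineq lam0 ‖ξ‖ ε D (∑ j, ‖w t j‖^2) (‖r t‖^2)
      (‖cdot ξ (w t)‖^2) (((starRingEnd ℂ) (r t) * cdot ξ (w t)).im) hlam0 hξ (by positivity) (by positivity)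
      (cdot_sq_le ξ (w t)) (im_mul_sq_le (r t) (cdot ξ (w t))) hε0 hεlam hD0 hD
    constructor
    · have h1 := h.1
      simp only [hEdef, hGdef]
      linarith [h1]
    · have h2 := h.2
      simp only [hEdef, hGdef]
      linarith [h2]
  have hLT0 : 0 ≤ L T := by
    have h1 := (hcomp T).1
    have h2 := hE0 T
    simp only [hLdef]
    linarith
  have hLS : L S ≤ (3/2) * E S := by
    have h1 := (hcomp S).2
    simp only [hLdef]
    linarith
  have hintle : c * (∫ u in S..T, E u) ≤ (3/2) * E S := by
    have h := hFTS
    rw [hFS] at h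
    simp only [hFdef] at h
    linarith [h]
  have hfinal : (∫ u in S..T, E u) ≤ 3/(2*c) * E S := by
    rw [show (3/(2*c)) * E S = ((3/2) * E S)/c by field_simp]
    rw [le_div_iff₀ hc0]
    linarith [hintle]
  simp only [hEdef] at hfinal ⊢
  exact hfinal
end
end

section
/- Let E : [0,∞) → [0,∞) be a non-increasing function and suppose there exists T₀ > 0 such that ∫_S^∞ E(t) dt ≤ T₀ E(S) for all S ≥ 0. Then E(t) ≤ E(0) e^{1 − t/T₀} for all t ≥ T₀. -/
open MeasureTheory Real Filter Topology

/-- the Haraux–Komornik lemma. `E : [0,∞) → [0,∞)` is non-increasing,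
integrable on every `(S,∞)`, and `∫_S^∞ E ≤ T₀ E(S)` for all `S ≥ 0`; then
`E(t) ≤ E(0) e^{1-t/T₀}` for `t ≥ T₀`. -/
theorem stmt10
    (E : ℝ → ℝ) (T₀ : ℝ) (hT₀ : 0 < T₀)
    (hnonneg : ∀ t : ℝ, 0 ≤ t → 0 ≤ E t)
    (hmono : AntitoneOn E (Set.Ici (0 : ℝ)))
    (hint : ∀ S : ℝ, 0 ≤ S → IntegrableOn E (Set.Ioi S))
    (hbound : ∀ S : ℝ, 0 ≤ S → (∫ t in Set.Ioi S, E t) ≤ T₀ * E S) :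
    ∀ t : ℝ, T₀ ≤ t → E t ≤ E 0 * Real.exp (1 - t / T₀) := by
  set h : ℝ → ℝ := fun S => ∫ t in Set.Ioi S, E t with hh
  have hnn : ∀ S : ℝ, 0 ≤ S → 0 ≤ h S := fun S hS =>
    setIntegral_nonneg measurableSet_Ioi fun t ht => hnonneg t (hS.trans (le_of_lt ht))
  have hsplit : ∀ S t : ℝ, 0 ≤ S → S ≤ t → h S = (∫ x in Set.Ioc S t, E x) + h t := by
    intro S t hS hSt
    simp only [hh]
    rw [← Set.Ioc_union_Ioi_eq_Ioi hSt,
      setIntegral_union (Set.Ioc_disjoint_Ioi le_rfl) measurableSet_Ioi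
        ((hint S hS).mono_set Set.Ioc_subset_Ioi_self) (hint t (hS.trans hSt))]
  have hIoc : ∀ S t : ℝ, 0 ≤ S → S ≤ t → (t - S) * E t ≤ ∫ x in Set.Ioc S t, E x := by
    intro S t hS hSt
    have hconst : ∫ x in Set.Ioc S t, E t = (t - S) * E t := by
      rw [setIntegral_const, Real.volume_real_Ioc_of_le hSt, smul_eq_mul]
    rw [← hconst]
    refine setIntegral_mono_on (integrableOn_const ?_)
      ((hint S hS).mono_set Set.Ioc_subset_Ioi_self) measurableSet_Ioc ?_
    · rw [Real.volume_Ioc]; exact ENNReal.ofReal_ne_top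
    · intro x hx
      exact hmono (Set.mem_Ici.2 (hS.trans hx.1.le)) (Set.mem_Ici.2 (hS.trans hSt))
        hx.2
  have step : ∀ S : ℝ, 0 ≤ S → ∀ c : ℝ, 0 ≤ c → h (S + c) * (1 + c / T₀) ≤ h S := by
    intro S hS c hc
    have h1 := hsplit S (S + c) hS (by linarith)
    have h2 := hIoc S (S + c) hS (by linarith)
    rw [show S + c - S = c from by ring] at h2
    have h3 := hbound (S + c) (by linarith)
    have h4 : c / T₀ * h (S + c) ≤ c * E (S + c) := by
      rw [div_mul_eq_mul_div, div_le_iff₀ hT₀]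
      nlinarith [mul_le_mul_of_nonneg_left h3 hc]
    have heq : h (S + c) * (1 + c / T₀) = h (S + c) + c / T₀ * h (S + c) := by ring
    rw [heq, h1]
    linarith
  have iter : ∀ c : ℝ, 0 ≤ c → ∀ n : ℕ, h ((n : ℝ) * c) * (1 + c / T₀) ^ n ≤ h 0 := by
    intro c hc n
    induction n with
    | zero => simp
    | succ n ih =>
      have hb : (0 : ℝ) ≤ 1 + c / T₀ := by positivity
      have hs := step ((n : ℝ) * c) (by positivity) c hc
      have harg : ((n + 1 : ℕ) : ℝ) * c = (n : ℝ) * c + c := by push_cast; ring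
      rw [harg, pow_succ,
        show h ((n : ℝ) * c + c) * ((1 + c / T₀) ^ n * (1 + c / T₀)) =
          h ((n : ℝ) * c + c) * (1 + c / T₀) * (1 + c / T₀) ^ n from by ring]
      exact le_trans (mul_le_mul_of_nonneg_right hs (pow_nonneg hb n)) ih
  have hdecay : ∀ t : ℝ, 0 ≤ t → h t * Real.exp (t / T₀) ≤ h 0 := by
    intro t ht
    have hlim : Tendsto (fun n : ℕ => h t * (1 + (t / T₀) / (n : ℝ)) ^ n) atTop
        (𝓝 (h t * Real.exp (t / T₀))) :=
      (Real.tendsto_one_add_div_pow_exp (t / T₀)).const_mul _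
    refine le_of_tendsto hlim ?_
    filter_upwards [eventually_ge_atTop 1] with n hn
    have hn0 : (0 : ℝ) < (n : ℝ) := by exact_mod_cast hn
    have hc : 0 ≤ t / (n : ℝ) := by positivity
    have hit := iter (t / (n : ℝ)) hc n
    rw [show (n : ℝ) * (t / (n : ℝ)) = t from by field_simp] at hit
    rw [show t / T₀ / (n : ℝ) = t / (n : ℝ) / T₀ from by ring]
    exact hit
  intro t ht
  have hS : 0 ≤ t - T₀ := by linarith
  have h1 := hsplit (t - T₀) t hS (by linarith)
  have h2 := hIoc (t - T₀) t hS (by linarith)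
  rw [show t - (t - T₀) = T₀ from by ring] at h2
  have h3 := hdecay (t - T₀) hS
  have h4 := hbound 0 le_rfl
  have h5 : 0 ≤ h t := hnn t (by linarith)
  set A := Real.exp ((t - T₀) / T₀) with hA
  have hApos : 0 < A := Real.exp_pos _
  have c1 : T₀ * E t ≤ h (t - T₀) := by rw [h1]; linarith
  have c2 : T₀ * E t * A ≤ T₀ * E 0 :=
    le_trans (mul_le_mul_of_nonneg_right c1 hApos.le) (h3.trans h4)
  have c2' : T₀ * (E t * A) ≤ T₀ * E 0 := by linear_combination c2
  have c3 : E t * A ≤ E 0 := le_of_mul_le_mul_left c2' hT₀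
  have hx : Real.exp (1 - t / T₀) = A⁻¹ := by
    rw [hA, ← Real.exp_neg]
    congr 1
    field_simp
    ring
  rw [hx]
  have : E t ≤ E 0 / A := (le_div_iff₀ hApos).mpr c3
  rwa [div_eq_mul_inv] at this
end

section
/- Let n ≥ 1, α > 0 and P₀ ∈ ℝⁿ. Then there exist a constant C₁ > 0 (depending only on n and α) and T > 0 such that for all t ≥ T: C₁² |P₀|² t^{−n/2} ≤ ∫_{ℝⁿ} ( |ξ·P₀|² / |ξ|² ) e^{−2α|ξ|²t} dξ ≤ C₁^{−2} |P₀|² t^{−n/2}. -/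
open MeasureTheory Real Filter

noncomputable section

namespace Stmt11Aux

variable {n : ℕ}

lemma sum_sq_eq (η : Esp n) : ∑ j, (η j)^2 = ‖η‖^2 := by
  rw [EuclideanSpace.norm_eq, Real.sq_sqrt (by positivity)]
  simp [sq_abs]

lemma sq_apply_le (η : Esp n) (j : Fin n) : (η j)^2 ≤ ‖η‖^2 := by
  rw [← sum_sq_eq]
  exact Finset.single_le_sum (fun i _ => sq_nonneg (η i)) (Finset.mem_univ j)

lemma gauss_integrable {c : ℝ} (hc : 0 < c) :
    Integrable (fun η : Esp n => rexp (-(c * ‖η‖^2))) := by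
  have hmp := (EuclideanSpace.volume_preserving_symm_measurableEquiv_toLp (Fin n)).symm
  rw [← hmp.integrable_comp_emb (MeasurableEquiv.measurableEmbedding _)]
  have heq : ((fun η : Esp n => rexp (-(c * ‖η‖^2)))
        ∘ (MeasurableEquiv.toLp 2 (Fin n → ℝ)).symm.symm)
      = fun v : Fin n → ℝ => ∏ i, rexp (-(c * (v i)^2)) := by
    funext v
    have h2 : ‖(MeasurableEquiv.toLp 2 (Fin n → ℝ)).symm.symm v‖^2 = ∑ i, (v i)^2 := by
      rw [← sum_sq_eq]; rfl
    rw [Function.comp_apply, h2, ← Real.exp_sum, Finset.mul_sum, Finset.sum_neg_distrib]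
  rw [heq]
  exact Integrable.fintype_prod (f := fun (_ : Fin n) (x : ℝ) => rexp (-(c * x^2)))
    (fun i => by simpa [neg_mul] using integrable_exp_neg_mul_sq hc)


lemma ratio_meas (j : Fin n) (c : ℝ) :
    Measurable (fun η : Esp n => (η j)^2 / ‖η‖^2 * rexp (-(c * ‖η‖^2))) := by
  have h1 : Measurable (fun η : Esp n => η j) := by
    exact (EuclideanSpace.proj j).continuous.measurable
  fun_prop

lemma ratio_integrable (j : Fin n) {c : ℝ} (hc : 0 < c) :
    Integrable (fun η : Esp n => (η j)^2 / ‖η‖^2 * rexp (-(c * ‖η‖^2))) := by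
  refine (gauss_integrable hc).mono' ((ratio_meas j c).aestronglyMeasurable) ?_
  filter_upwards with η
  rw [Real.norm_eq_abs, abs_mul, abs_of_nonneg (Real.exp_pos _).le]
  have hr : |(η j)^2 / ‖η‖^2| ≤ 1 := by
    rw [abs_div, abs_of_nonneg (sq_nonneg _), abs_of_nonneg (sq_nonneg _)]
    rcases eq_or_ne η 0 with h | h
    · simp [h]
    · exact div_le_one_of_le₀ (sq_apply_le η j)
        (sq_nonneg _)
  calc |(η j)^2 / ‖η‖^2| * rexp (-(c * ‖η‖^2)) ≤ 1 * rexp (-(c * ‖η‖^2)) := by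
        gcongr
    _ = rexp (-(c * ‖η‖^2)) := one_mul _

lemma J_swap (j k : Fin n) (c : ℝ) :
    (∫ η : Esp n, (η j)^2 / ‖η‖^2 * rexp (-(c * ‖η‖^2)))
      = ∫ η : Esp n, (η k)^2 / ‖η‖^2 * rexp (-(c * ‖η‖^2)) := by
  set σ : Esp n ≃ₗᵢ[ℝ] Esp n := LinearIsometryEquiv.piLpCongrLeft 2 ℝ ℝ (Equiv.swap j k) with hσ
  calc (∫ η : Esp n, (η j)^2 / ‖η‖^2 * rexp (-(c * ‖η‖^2)))
      = ∫ η : Esp n, ((σ η) j)^2 / ‖σ η‖^2 * rexp (-(c * ‖σ η‖^2)) := by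
        rw [σ.measurePreserving.integral_comp σ.toHomeomorph.measurableEmbedding
          (fun η : Esp n => (η j)^2 / ‖η‖^2 * rexp (-(c * ‖η‖^2)))]
    _ = ∫ η : Esp n, (η k)^2 / ‖η‖^2 * rexp (-(c * ‖η‖^2)) := by
        congr 1
        funext η
        have h1 : (σ η) j = η k := by
          simp [hσ, LinearIsometryEquiv.piLpCongrLeft_apply, Equiv.piCongrLeft'_apply]
        rw [h1, σ.norm_map]


lemma esp_nontrivial (j : Fin n) : Nontrivial (Esp n) := by
  refine ⟨⟨EuclideanSpace.single j 1, 0, fun h => ?_⟩⟩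
  have h2 := congrArg (fun v : Esp n => v j) h
  rw [EuclideanSpace.single_apply] at h2
  simp at h2

lemma gauss_value {c : ℝ} (hc : 0 < c) :
    ∫ η : Esp n, rexp (-(c * ‖η‖^2)) = (π / c) ^ ((n : ℝ) / 2) := by
  have h := GaussianFourier.integral_rexp_neg_mul_sq_norm (V := Esp n) hc
  simpa [neg_mul, finrank_euclideanSpace_fin] using h

lemma J_value {c : ℝ} (hc : 0 < c) (j : Fin n) :
    ∫ η : Esp n, (η j)^2 / ‖η‖^2 * rexp (-(c * ‖η‖^2))
      = (π / c) ^ ((n : ℝ) / 2) / n := by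
  haveI := esp_nontrivial j
  have h0 : (volume : Measure (Esp n)) {0} = 0 := measure_singleton 0
  have key : ∑ k : Fin n, ∫ η : Esp n, (η k)^2 / ‖η‖^2 * rexp (-(c * ‖η‖^2))
      = (π / c) ^ ((n : ℝ) / 2) := by
    rw [← integral_finset_sum _ (fun k _ => ratio_integrable k hc), ← gauss_value hc]
    apply integral_congr_ae
    filter_upwards [compl_mem_ae_iff.2 h0] with η hη
    have hη0 : η ≠ 0 := by simpa using hη
    rw [← Finset.sum_mul, ← Finset.sum_div, sum_sq_eq,
      div_self (pow_ne_zero 2 (norm_ne_zero_iff.2 hη0)), one_mul]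
  rw [Finset.sum_congr rfl (fun k _ => J_swap k j c), Finset.sum_const,
    Finset.card_univ, Fintype.card_fin, nsmul_eq_mul] at key
  have hn0 : (n : ℝ) ≠ 0 := by
    have : 0 < n := j.pos
    positivity
  field_simp at key ⊢
  simp only [mul_comm c]
  linarith [key]

end Stmt11Aux

open Stmt11Aux in
/-- two-sided bound of order `t^{-n/2}` for
`∫ (|ξ·P₀|²/|ξ|²) e^{-2α|ξ|²t} dξ`. -/
theorem stmt11
    (n : ℕ) (hn : 1 ≤ n) (α : ℝ) (hα : 0 < α) (P₀ : Esp n) :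
    ∃ C₁ > (0 : ℝ), ∃ T > (0 : ℝ), ∀ t : ℝ, T ≤ t →
      C₁ ^ 2 * ‖P₀‖ ^ 2 * t ^ (-(n : ℝ) / 2)
        ≤ (∫ ξ : Esp n, ((∑ j, ξ j * P₀ j) ^ 2 / ‖ξ‖ ^ 2)
            * Real.exp (-(2 * α * ‖ξ‖ ^ 2 * t)))
      ∧ (∫ ξ : Esp n, ((∑ j, ξ j * P₀ j) ^ 2 / ‖ξ‖ ^ 2)
            * Real.exp (-(2 * α * ‖ξ‖ ^ 2 * t)))
          ≤ C₁⁻¹ ^ 2 * ‖P₀‖ ^ 2 * t ^ (-(n : ℝ) / 2) := by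
  have j₀ : Fin n := ⟨0, hn⟩
  have hn0 : (0:ℝ) < n := by exact_mod_cast hn
  set K : ℝ := (π / (2*α)) ^ ((n:ℝ)/2) / n with hK
  have hKpos : 0 < K := by
    have : 0 < π / (2*α) := by positivity
    positivity
  set m : ℝ := min (Real.sqrt K) (Real.sqrt K)⁻¹ with hm
  have hmpos : 0 < m := lt_min (Real.sqrt_pos.2 hKpos) (by positivity)
  refine ⟨m, hmpos, 1, one_pos, fun t ht => ?_⟩
  have ht0 : (0:ℝ) < t := lt_of_lt_of_le one_pos ht
  have hc : 0 < 2*α*t := by positivity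
  have hI : (∫ ξ : Esp n, ((∑ j, ξ j * P₀ j) ^ 2 / ‖ξ‖ ^ 2)
            * Real.exp (-(2 * α * ‖ξ‖ ^ 2 * t)))
      = ‖P₀‖^2 * K * t ^ (-(n:ℝ)/2) := by
    have hval : (π / (2*α*t)) ^ ((n : ℝ) / 2) / n = K * t ^ (-(n:ℝ)/2) := by
      have h1 : π / (2*α*t) = (π/(2*α)) * t⁻¹ := by
        field_simp
      rw [h1, Real.mul_rpow (by positivity) (by positivity),
        Real.inv_rpow ht0.le, ← Real.rpow_neg ht0.le, neg_div]
      ring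
    rcases eq_or_ne P₀ 0 with hP | hP
    · simp [hP]
    · set e : Esp n := ‖P₀‖⁻¹ • P₀ with he
      have hPn : ‖P₀‖ ≠ 0 := norm_ne_zero_iff.2 hP
      have hen : ‖e‖ = 1 := by
        rw [he, norm_smul, norm_inv, norm_norm, inv_mul_cancel₀ hPn]
      have horth : Orthonormal ℝ (Set.restrict {j₀} (fun _ : Fin n => e)) := by
        constructor
        · intro i
          exact hen
        · intro i j hij
          exact absurd (Subtype.ext (i.2.trans j.2.symm)) hij
      obtain ⟨b, hb⟩ := horth.exists_orthonormalBasis_extension_of_card_eq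
        (by simp [finrank_euclideanSpace_fin])
      have hbj : b j₀ = e := hb j₀ rfl
      have hsum : ∀ ξ : Esp n, ∑ j, ξ j * P₀ j = ‖P₀‖ * b.repr ξ j₀ := by
        intro ξ
        rw [b.repr_apply_apply, hbj, he, real_inner_smul_left]
        rw [PiLp.inner_apply]
        simp only [RCLike.inner_apply, conj_trivial]
        rw [← mul_assoc, mul_inv_cancel₀ hPn, one_mul]
      have hstep : (∫ ξ : Esp n, ((∑ j, ξ j * P₀ j) ^ 2 / ‖ξ‖ ^ 2)
            * Real.exp (-(2 * α * ‖ξ‖ ^ 2 * t)))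
          = ‖P₀‖^2 * ∫ ξ : Esp n,
              ((b.repr ξ) j₀)^2 / ‖b.repr ξ‖^2 * rexp (-((2*α*t) * ‖b.repr ξ‖^2)) := by
        rw [← integral_const_mul]
        congr 1
        funext ξ
        rw [hsum ξ, b.repr.norm_map]
        ring_nf
      rw [hstep, b.measurePreserving_repr.integral_comp
        b.repr.toHomeomorph.measurableEmbedding
        (fun η : Esp n => (η j₀)^2 / ‖η‖^2 * rexp (-((2*α*t) * ‖η‖^2))),
        J_value hc j₀, hval]
      ring
  rw [hI]
  have hKle : m^2 ≤ K := by
    have := pow_le_pow_left₀ hmpos.le (min_le_left (Real.sqrt K) (Real.sqrt K)⁻¹) 2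
    rwa [Real.sq_sqrt hKpos.le] at this
  have hKge : K ≤ (m⁻¹)^2 := by
    have h2 : Real.sqrt K ≤ m⁻¹ := by
      rw [← inv_inv (Real.sqrt K)]
      exact inv_anti₀ hmpos (min_le_right _ _)
    have := pow_le_pow_left₀ (Real.sqrt_nonneg K) h2 2
    rwa [Real.sq_sqrt hKpos.le] at this
  have hx : (0:ℝ) ≤ ‖P₀‖^2 * t ^ (-(n:ℝ)/2) := by positivity
  constructor
  · have h3 := mul_le_mul_of_nonneg_right hKle hx
    calc m ^ 2 * ‖P₀‖ ^ 2 * t ^ (-(n:ℝ)/2)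
        = m ^ 2 * (‖P₀‖ ^ 2 * t ^ (-(n:ℝ)/2)) := by ring
      _ ≤ K * (‖P₀‖ ^ 2 * t ^ (-(n:ℝ)/2)) := h3
      _ = ‖P₀‖^2 * K * t ^ (-(n:ℝ)/2) := by ring
  · have h3 := mul_le_mul_of_nonneg_right hKge hx
    calc ‖P₀‖^2 * K * t ^ (-(n:ℝ)/2)
        = K * (‖P₀‖ ^ 2 * t ^ (-(n:ℝ)/2)) := by ring
      _ ≤ (m⁻¹)^2 * (‖P₀‖ ^ 2 * t ^ (-(n:ℝ)/2)) := h3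
      _ = m⁻¹ ^ 2 * ‖P₀‖ ^ 2 * t ^ (-(n:ℝ)/2) := by ring
end
end

section
/- Let n ≥ 1, α > 0, β ≥ 0, γ > 0. Then there exist a constant C₂ > 0 (depending only on n, α, β, γ) and T > 0 such that for all t ≥ T: C₂² t^{−n/2} ≤ ∫_{ℝⁿ} e^{−(α+β)|ξ|²t} sin²(γ t |ξ|) dξ ≤ C₂^{−2} t^{−n/2}. -/
open MeasureTheory Real Filter

noncomputable section

open Set in
lemma oneD (n : ℕ) (c : ℝ) (hc : 0 < c) :
    ∃ A > (0:ℝ), ∃ B > (0:ℝ), ∀ θ : ℝ, Real.pi / 2 ≤ θ →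
      A ≤ (∫ u in Set.Ioi (0:ℝ), u ^ (n-1) * (Real.exp (-(c * u^2)) * Real.sin (θ*u)^2)) ∧
      (∫ u in Set.Ioi (0:ℝ), u ^ (n-1) * (Real.exp (-(c * u^2)) * Real.sin (θ*u)^2)) ≤ B := by
  set w : ℝ → ℝ := fun u => u ^ (n-1) * Real.exp (-(c * u^2)) with hw
  have hwcont : Continuous w := by fun_prop
  have hwnn : ∀ u : ℝ, 0 ≤ u → 0 ≤ w u := fun u hu => by positivity
  have hwint : IntegrableOn w (Ioi 0) := by
    have h0 : IntegrableOn (fun u : ℝ => u ^ ((n-1 : ℕ) : ℝ) * Real.exp (-c * u^2)) (Ioi 0) :=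
      integrableOn_rpow_mul_exp_neg_mul_sq hc (lt_of_lt_of_le neg_one_lt_zero (Nat.cast_nonneg _))
    refine h0.congr_fun (fun u hu => ?_) measurableSet_Ioi
    beta_reduce
    rw [Real.rpow_natCast, neg_mul]
  set M : ℝ := Real.exp (4 * c) with hM
  have hMpos : 0 < M := Real.exp_pos _
  set A0 : ℝ := ∫ u in (0:ℝ)..1, w u with hA0
  have hA0pos : 0 < A0 := by
    refine intervalIntegral.intervalIntegral_pos_of_pos_on
      (hwcont.intervalIntegrable _ _) (fun x hx => ?_) one_pos
    have hx0 : 0 < x := hx.1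
    positivity
  set B : ℝ := ∫ u in Ioi (0:ℝ), w u with hB
  have hIoc_sub : (Ioc (0:ℝ) 1) ⊆ Ioi 0 := Ioc_subset_Ioi_self
  have hBpos : 0 < B := by
    have h1 : A0 ≤ B := by
      rw [hA0, intervalIntegral.integral_of_le (by norm_num : (0:ℝ) ≤ 1)]
      refine setIntegral_mono_set hwint ?_ (HasSubset.Subset.eventuallyLE hIoc_sub)
      filter_upwards [ae_restrict_mem measurableSet_Ioi] with u hu using hwnn u (le_of_lt hu)
    linarith
  refine ⟨A0 / (1 + M), by positivity, B, hBpos, fun θ hθ => ?_⟩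
  have hπ : (0:ℝ) < Real.pi / 2 := by positivity
  have hθ0 : 0 < θ := lt_of_lt_of_le hπ hθ
  set F : ℝ → ℝ := fun u => w u * Real.sin (θ*u)^2 with hF
  have hFeq : ∀ u, u ^ (n-1) * (Real.exp (-(c * u^2)) * Real.sin (θ*u)^2) = F u := by
    intro u; rw [hF, hw]; ring
  have hFcont : Continuous F := by fun_prop
  have hFnn : ∀ u : ℝ, 0 ≤ u → 0 ≤ F u := fun u hu => mul_nonneg (hwnn u hu) (sq_nonneg _)
  have hFle : ∀ u : ℝ, 0 ≤ u → F u ≤ w u := by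
    intro u hu
    have h1 := Real.sin_sq_le_one (θ * u)
    simp only [hF]
    nlinarith [hwnn u hu, sq_nonneg (Real.sin (θ*u))]
  have hFint : IntegrableOn F (Ioi 0) := by
    refine Integrable.mono' hwint hFcont.aestronglyMeasurable ?_
    filter_upwards [ae_restrict_mem measurableSet_Ioi] with u hu
    rw [Real.norm_eq_abs, abs_of_nonneg (hFnn u hu.le)]
    exact hFle u hu.le
  simp only [hFeq]
  constructor
  · -- lower bound
    set h : ℝ := Real.pi / (2 * θ) with hh
    have hhpos : 0 < h := by positivity
    have hh1 : h ≤ 1 := by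
      rw [hh, div_le_one (by positivity)]
      linarith
    have hθh : θ * h = Real.pi / 2 := by
      rw [hh]; field_simp
    -- K := ∫ u in 0..1, w u * cos(θ u)^2
    set K : ℝ := ∫ u in (0:ℝ)..1, w u * Real.cos (θ*u)^2 with hK
    -- A0 = ∫₀¹ F + K
    have hsplit : A0 = (∫ u in (0:ℝ)..1, F u) + K := by
      rw [hK, ← intervalIntegral.integral_add (hFcont.intervalIntegrable _ _)
        ((show Continuous (fun u => w u * Real.cos (θ*u)^2) from hwcont.mul (by fun_prop)).intervalIntegrable _ _)]
      apply intervalIntegral.integral_congr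
      intro u _
      have h1 := Real.sin_sq_add_cos_sq (θ * u)
      simp only [hF]
      linear_combination (-(w u)) * h1
    -- shift K
    have hKshift : K = ∫ u in h..(1+h), w (u - h) * Real.cos (θ*(u - h))^2 := by
      rw [hK]
      have := intervalIntegral.integral_comp_add_right
        (fun u => w (u - h) * Real.cos (θ*(u - h))^2) h (a := 0) (b := 1)
      simp only [add_sub_cancel_right, zero_add] at this
      rw [← this]
    have hcoseq : ∀ u : ℝ, Real.cos (θ*(u - h)) = Real.sin (θ*u) := by
      intro u
      have : θ * (u - h) = θ * u - Real.pi / 2 := by rw [mul_sub, hθh]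
      rw [this, Real.cos_sub, Real.cos_pi_div_two, Real.sin_pi_div_two]
      ring
    have hKle : K ≤ M * ∫ u in Ioi (0:ℝ), F u := by
      rw [hKshift, intervalIntegral.integral_of_le (by linarith : h ≤ 1 + h)]
      have step1 : (∫ u in Ioc h (1+h), w (u - h) * Real.cos (θ*(u - h))^2)
          ≤ ∫ u in Ioc h (1+h), M * F u := by
        refine setIntegral_mono_on ?_ ?_ measurableSet_Ioc (fun u hu => ?_)
        · exact ((hwcont.comp (by fun_prop)).mul (by fun_prop)).integrableOn_Ioc
        · exact (Continuous.integrableOn_Ioc (by fun_prop))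
        · have hu1 : h < u := hu.1
          have hu2 : u ≤ 1 + h := hu.2
          rw [hcoseq u, hF]
          have hwb : w (u - h) ≤ M * w u := by
            rw [hw, hM]
            have h1 : (u - h) ^ (n-1) ≤ u ^ (n-1) :=
              pow_le_pow_left₀ (by linarith) (by linarith) _
            have h2 : Real.exp (-(c * (u-h)^2)) ≤ Real.exp (4*c) * Real.exp (-(c * u^2)) := by
              rw [← Real.exp_add]
              apply Real.exp_le_exp.mpr
              have huh : u * h ≤ 2 := by nlinarith
              nlinarith [mul_le_mul_of_nonneg_left huh hc.le, sq_nonneg h,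
                mul_nonneg (sq_nonneg h) hc.le]
            calc (u - h) ^ (n-1) * Real.exp (-(c * (u-h)^2))
                ≤ u ^ (n-1) * (Real.exp (4*c) * Real.exp (-(c * u^2))) := by
                  apply mul_le_mul h1 h2 (Real.exp_pos _).le (pow_nonneg (by linarith) _)
              _ = Real.exp (4*c) * (u ^ (n-1) * Real.exp (-(c * u^2))) := by ring
          calc w (u - h) * Real.sin (θ*u)^2 ≤ (M * w u) * Real.sin (θ*u)^2 :=
                mul_le_mul_of_nonneg_right hwb (sq_nonneg _)
            _ = M * (w u * Real.sin (θ*u)^2) := by ring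
      have step2 : (∫ u in Ioc h (1+h), M * F u) ≤ M * ∫ u in Ioi (0:ℝ), F u := by
        rw [MeasureTheory.integral_const_mul]
        apply mul_le_mul_of_nonneg_left _ hMpos.le
        refine setIntegral_mono_set hFint ?_ ?_
        · filter_upwards [ae_restrict_mem measurableSet_Ioi] with u hu using hFnn u hu.le
        · exact HasSubset.Subset.eventuallyLE (fun u hu => lt_trans hhpos hu.1)
      linarith
    have hJ1 : (∫ u in (0:ℝ)..1, F u) ≤ ∫ u in Ioi (0:ℝ), F u := by
      rw [intervalIntegral.integral_of_le (by norm_num : (0:ℝ) ≤ 1)]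
      refine setIntegral_mono_set hFint ?_ (HasSubset.Subset.eventuallyLE hIoc_sub)
      filter_upwards [ae_restrict_mem measurableSet_Ioi] with u hu using hFnn u hu.le
    rw [div_le_iff₀ (by positivity)]
    nlinarith [hKle, hJ1, hsplit]
  · -- upper bound
    rw [hB]
    refine setIntegral_mono_on hFint hwint measurableSet_Ioi (fun u hu => hFle u hu.le)

/-- two-sided bound of order `t^{-n/2}` for
`∫ e^{-(α+β)|ξ|²t} sin²(γt|ξ|) dξ`. -/
theorem stmt12
    (n : ℕ) (hn : 1 ≤ n) (α β γ : ℝ) (hα : 0 < α) (hβ : 0 ≤ β) (hγ : 0 < γ) :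
    ∃ C₂ > (0 : ℝ), ∃ T > (0 : ℝ), ∀ t : ℝ, T ≤ t →
      C₂ ^ 2 * t ^ (-(n : ℝ) / 2)
        ≤ (∫ ξ : Esp n, Real.exp (-((α + β) * ‖ξ‖ ^ 2 * t)) * Real.sin (γ * t * ‖ξ‖) ^ 2)
      ∧ (∫ ξ : Esp n, Real.exp (-((α + β) * ‖ξ‖ ^ 2 * t)) * Real.sin (γ * t * ‖ξ‖) ^ 2)
          ≤ C₂⁻¹ ^ 2 * t ^ (-(n : ℝ) / 2) := by
  have hc : (0:ℝ) < α + β := by linarith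
  set c : ℝ := α + β with hcdef
  haveI : Nontrivial (Esp n) := by
    apply Module.nontrivial_of_finrank_pos (R := ℝ)
    rw [finrank_euclideanSpace_fin]
    exact hn
  set V₀ : ℝ := (volume (Metric.ball (0 : Esp n) 1)).toReal with hV₀def
  have hV₀pos : 0 < V₀ := by
    apply ENNReal.toReal_pos
    · exact (Metric.measure_ball_pos volume (0 : Esp n) one_pos).ne'
    · exact MeasureTheory.measure_ball_lt_top.ne
  obtain ⟨A, hA, B, hB, hbounds⟩ := oneD n c hc
  have hnpos : (0:ℝ) < (n:ℝ) := by exact_mod_cast hn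
  set L : ℝ := (n:ℝ) * V₀ * A with hLdef
  set U : ℝ := (n:ℝ) * V₀ * B with hUdef
  have hLpos : 0 < L := by positivity
  have hUpos : 0 < U := by positivity
  refine ⟨min (Real.sqrt L) ((Real.sqrt U)⁻¹), by positivity,
    1 + (Real.pi / (2*γ))^2, by positivity, fun t ht => ?_⟩
  set C₂ : ℝ := min (Real.sqrt L) ((Real.sqrt U)⁻¹) with hC₂def
  have hC₂pos : 0 < C₂ := by positivity
  have hπγ : (0:ℝ) < Real.pi / (2*γ) := by positivity
  have ht0 : (0:ℝ) < t := by nlinarith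
  set s : ℝ := Real.sqrt t with hsdef
  have hs0 : 0 < s := Real.sqrt_pos.mpr ht0
  set θ : ℝ := γ * s with hθdef
  have hθge : Real.pi / 2 ≤ θ := by
    have h1 : Real.pi / (2*γ) ≤ s := by
      rw [hsdef]
      calc Real.pi / (2*γ) = Real.sqrt ((Real.pi / (2*γ))^2) :=
            (Real.sqrt_sq hπγ.le).symm
        _ ≤ Real.sqrt t := Real.sqrt_le_sqrt (by nlinarith)
    calc Real.pi / 2 = γ * (Real.pi / (2*γ)) := by field_simp
      _ ≤ γ * s := by nlinarith
  set σ : ℝ := s⁻¹ with hσdef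
  have hσ0 : 0 < σ := by positivity
  have hσ2 : σ^2 * t = 1 := by
    rw [hσdef, hsdef]
    rw [← Real.sqrt_inv]
    rw [Real.sq_sqrt (by positivity)]
    field_simp
  have hts : t * σ = s := by
    rw [hσdef]
    rw [mul_inv_eq_iff_eq_mul₀ hs0.ne']
    rw [hsdef]
    exact (Real.mul_self_sqrt ht0.le).symm
  -- radial reduction
  have hradial : (∫ ξ : Esp n, Real.exp (-(c * ‖ξ‖ ^ 2 * t)) * Real.sin (γ * t * ‖ξ‖) ^ 2)
      = (n:ℝ) * V₀ * ∫ y in Set.Ioi (0:ℝ),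
          y ^ (n-1) * (Real.exp (-(c * y ^ 2 * t)) * Real.sin (γ * t * y) ^ 2) := by
    have h := MeasureTheory.integral_fun_norm_addHaar (volume : Measure (Esp n))
      (fun y => Real.exp (-(c * y ^ 2 * t)) * Real.sin (γ * t * y) ^ 2)
    rw [finrank_euclideanSpace_fin] at h
    rw [h]
    simp only [nsmul_eq_mul, smul_eq_mul, measureReal_def]
    rw [hV₀def]
    ring
  -- scaling
  have hscale : (∫ y in Set.Ioi (0:ℝ),
        y ^ (n-1) * (Real.exp (-(c * y ^ 2 * t)) * Real.sin (γ * t * y) ^ 2))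
      = σ ^ n * ∫ x in Set.Ioi (0:ℝ),
          x ^ (n-1) * (Real.exp (-(c * x ^ 2)) * Real.sin (θ * x) ^ 2) := by
    have h1 := MeasureTheory.integral_comp_mul_left_Ioi
      (fun y => y ^ (n-1) * (Real.exp (-(c * y ^ 2 * t)) * Real.sin (γ * t * y) ^ 2)) 0 hσ0
    rw [mul_zero] at h1
    have h2 : ∀ x : ℝ, (σ * x) ^ (n-1) *
        (Real.exp (-(c * (σ * x) ^ 2 * t)) * Real.sin (γ * t * (σ * x)) ^ 2)
        = σ ^ (n-1) * (x ^ (n-1) * (Real.exp (-(c * x ^ 2)) * Real.sin (θ * x) ^ 2)) := by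
      intro x
      have e1 : c * (σ * x) ^ 2 * t = c * x ^ 2 := by linear_combination c * x^2 * hσ2
      have e2 : γ * t * (σ * x) = θ * x := by
        rw [hθdef, ← hts]; ring
      rw [e1, e2, mul_pow]
      ring
    simp only [h2] at h1
    rw [MeasureTheory.integral_const_mul] at h1
    have h3 : σ ^ n = σ * σ ^ (n-1) := by
      rw [← pow_succ', Nat.sub_add_cancel hn]
    rw [h3, mul_assoc, h1, smul_eq_mul, ← mul_assoc, mul_inv_cancel₀ hσ0.ne', one_mul]
  have hσn : σ ^ n = t ^ (-(n : ℝ) / 2) := by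
    have e1 : σ = t ^ (-(1:ℝ)/2) := by
      rw [hσdef, hsdef, Real.sqrt_eq_rpow, ← Real.rpow_neg ht0.le]
      norm_num
    rw [e1, ← Real.rpow_natCast (t ^ (-(1:ℝ)/2)) n, ← Real.rpow_mul ht0.le]
    congr 1
    ring
  obtain ⟨hJA, hJB⟩ := hbounds θ hθge
  set J : ℝ := ∫ x in Set.Ioi (0:ℝ),
      x ^ (n-1) * (Real.exp (-(c * x ^ 2)) * Real.sin (θ * x) ^ 2) with hJdef
  have hIeq : (∫ ξ : Esp n, Real.exp (-(c * ‖ξ‖ ^ 2 * t)) * Real.sin (γ * t * ‖ξ‖) ^ 2)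
      = ((n:ℝ) * V₀ * J) * t ^ (-(n : ℝ) / 2) := by
    rw [hradial, hscale, hσn]; ring
  have hrpos : (0:ℝ) < t ^ (-(n : ℝ) / 2) := Real.rpow_pos_of_pos ht0 _
  have hlow : C₂ ^ 2 ≤ L := by
    calc C₂ ^ 2 ≤ (Real.sqrt L) ^ 2 :=
          pow_le_pow_left₀ hC₂pos.le (min_le_left _ _) 2
      _ = L := Real.sq_sqrt hLpos.le
  have hupp : U ≤ (C₂⁻¹) ^ 2 := by
    have h1 : Real.sqrt U ≤ C₂⁻¹ := by
      have := inv_anti₀ hC₂pos (min_le_right (Real.sqrt L) ((Real.sqrt U)⁻¹))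
      rwa [inv_inv] at this
    calc U = (Real.sqrt U) ^ 2 := (Real.sq_sqrt hUpos.le).symm
      _ ≤ (C₂⁻¹) ^ 2 := pow_le_pow_left₀ (Real.sqrt_nonneg _) h1 2
  constructor
  · rw [hIeq]
    apply mul_le_mul_of_nonneg_right _ hrpos.le
    refine le_trans hlow ?_
    rw [hLdef]
    exact mul_le_mul_of_nonneg_left hJA (by positivity)
  · rw [hIeq]
    apply mul_le_mul_of_nonneg_right _ hrpos.le
    refine le_trans ?_ hupp
    rw [hUdef]
    exact mul_le_mul_of_nonneg_left hJB (by positivity)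
end
end

section
/- Let n ≥ 1, α > 0, β ≥ 0, γ > 0 and P₀ ∈ ℝⁿ. Then there exist a constant C₃ > 0 (depending only on n, α, β, γ) and T > 0 such that for all t ≥ T: C₃² |P₀|² t^{−n/2} ≤ ∫_{ℝⁿ} ( |ξ·P₀|² / |ξ|² ) e^{−(α+β)|ξ|²t} cos²(γ t |ξ|) dξ ≤ C₃^{−2} |P₀|² t^{−n/2}. -/
open MeasureTheory Real Filter
open scoped Topology FourierTransform

noncomputable section

noncomputable def negCo (n : ℕ) (i : Fin n) : Esp n ≃ₗᵢ[ℝ] Esp n :=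
  LinearIsometryEquiv.piLpCongrRight 2
    (fun k => if k = i then LinearIsometryEquiv.neg ℝ else LinearIsometryEquiv.refl ℝ ℝ)

lemma negCo_apply (n : ℕ) (i : Fin n) (ξ : Esp n) (k : Fin n) :
    negCo n i ξ k = if k = i then -ξ k else ξ k := by
  simp only [negCo, LinearIsometryEquiv.piLpCongrRight_apply]
  rcases eq_or_ne k i with rfl | h
  · simp
  · simp [h]

noncomputable def swapCo (n : ℕ) (i j : Fin n) : Esp n ≃ₗᵢ[ℝ] Esp n :=
  LinearIsometryEquiv.piLpCongrLeft 2 ℝ ℝ (Equiv.swap i j)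

lemma swapCo_apply (n : ℕ) (i j : Fin n) (ξ : Esp n) (k : Fin n) :
    swapCo n i j ξ k = ξ (Equiv.swap i j k) := by
  simp [swapCo, Equiv.piCongrLeft']

lemma esp_norm_sq_eq (n : ℕ) (ξ : Esp n) : ‖ξ‖^2 = ∑ i, ξ i ^ 2 := by
  rw [EuclideanSpace.norm_eq, Real.sq_sqrt]
  · simp [sq_abs]
  · positivity

lemma esp_abs_coord_le (n : ℕ) (i : Fin n) (ξ : Esp n) : |ξ i| ≤ ‖ξ‖ := by
  have h1 : ξ i ^ 2 ≤ ‖ξ‖ ^ 2 := by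
    rw [esp_norm_sq_eq]
    exact Finset.single_le_sum (fun j _ => sq_nonneg (ξ j)) (Finset.mem_univ i)
  calc |ξ i| = Real.sqrt (ξ i ^ 2) := (Real.sqrt_sq_eq_abs _).symm
    _ ≤ Real.sqrt (‖ξ‖^2) := Real.sqrt_le_sqrt h1
    _ = ‖ξ‖ := Real.sqrt_sq (norm_nonneg _)

lemma esp_coord_frac_le (n : ℕ) (i j : Fin n) (ξ : Esp n) : |ξ i * ξ j / ‖ξ‖^2| ≤ 1 := by
  rcases eq_or_ne ξ 0 with rfl | hξ
  · simp
  · have hN : (0:ℝ) < ‖ξ‖^2 := pow_pos (norm_pos_iff.mpr hξ) 2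
    rw [abs_div, div_le_one (by rwa [abs_of_pos hN]), abs_of_pos hN, abs_mul, sq]
    exact mul_le_mul (esp_abs_coord_le n i ξ) (esp_abs_coord_le n j ξ) (abs_nonneg _) (norm_nonneg _)

lemma integrable_coord_mul (n : ℕ) {h : ℝ → ℝ}
    (hint : Integrable (fun ξ : Esp n => h ‖ξ‖)) (i j : Fin n) :
    Integrable (fun ξ : Esp n => ξ i * ξ j / ‖ξ‖^2 * h ‖ξ‖) := by
  refine hint.bdd_mul (c := 1) ?_ (Eventually.of_forall fun ξ => by rw [Real.norm_eq_abs]; exact esp_coord_frac_le n i j ξ)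
  apply Measurable.aestronglyMeasurable
  fun_prop

lemma sym_lemma (n : ℕ) (hn : 1 ≤ n) (h : ℝ → ℝ)
    (hint : Integrable (fun ξ : Esp n => h ‖ξ‖)) (P : Esp n) :
    ∫ ξ : Esp n, (∑ j, ξ j * P j)^2 / ‖ξ‖^2 * h ‖ξ‖
      = (‖P‖^2 / n) * ∫ ξ : Esp n, h ‖ξ‖ := by
  haveI : Nonempty (Fin n) := ⟨⟨0, hn⟩⟩
  -- off-diagonal vanishing
  have hQ0 : ∀ i j : Fin n, i ≠ j → (∫ ξ : Esp n, ξ i * ξ j / ‖ξ‖^2 * h ‖ξ‖) = 0 := by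
    intro i j hij
    set g : Esp n → ℝ := fun ξ => ξ i * ξ j / ‖ξ‖^2 * h ‖ξ‖ with hg
    have hcomp := MeasureTheory.integral_comp (negCo n i) g
    have heq : ∀ ξ : Esp n, g (negCo n i ξ) = - g ξ := by
      intro ξ
      have h1 : negCo n i ξ i = -ξ i := by rw [negCo_apply, if_pos rfl]
      have h2 : negCo n i ξ j = ξ j := by rw [negCo_apply, if_neg (Ne.symm hij)]
      simp only [hg]
      rw [h1, h2, LinearIsometryEquiv.norm_map]
      ring
    rw [show (fun ξ : Esp n => g (negCo n i ξ)) = fun ξ => - g ξ from funext heq] at hcomp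
    rw [integral_neg] at hcomp
    linarith
  -- diagonal entries all equal
  have hQswap : ∀ i j : Fin n, (∫ ξ : Esp n, ξ i * ξ i / ‖ξ‖^2 * h ‖ξ‖)
      = ∫ ξ : Esp n, ξ j * ξ j / ‖ξ‖^2 * h ‖ξ‖ := by
    intro i j
    set g : Esp n → ℝ := fun ξ => ξ i * ξ i / ‖ξ‖^2 * h ‖ξ‖ with hg
    have hcomp := MeasureTheory.integral_comp (swapCo n i j) g
    have heq : ∀ ξ : Esp n, g (swapCo n i j ξ) = ξ j * ξ j / ‖ξ‖^2 * h ‖ξ‖ := by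
      intro ξ
      have h1 : swapCo n i j ξ i = ξ j := by rw [swapCo_apply, Equiv.swap_apply_left]
      simp only [hg]
      rw [h1, LinearIsometryEquiv.norm_map]
    rw [show (fun ξ : Esp n => g (swapCo n i j ξ))
      = fun ξ : Esp n => ξ j * ξ j / ‖ξ‖^2 * h ‖ξ‖ from funext heq] at hcomp
    exact hcomp.symm
  -- sum of diagonal entries
  have hsum : ∑ i : Fin n, (∫ ξ : Esp n, ξ i * ξ i / ‖ξ‖^2 * h ‖ξ‖) = ∫ ξ : Esp n, h ‖ξ‖ := by
    rw [← integral_finset_sum _ (fun i _ => integrable_coord_mul n hint i i)]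
    have h0 : (volume : Measure (Esp n)) {0} = 0 := measure_singleton 0
    have hae : ∀ᵐ ξ : Esp n, ξ ≠ 0 := by
      rw [ae_iff]
      simpa using h0
    refine integral_congr_ae (hae.mono fun ξ hξ => ?_)
    have hN : ‖ξ‖^2 ≠ 0 := ne_of_gt (pow_pos (norm_pos_iff.mpr hξ) 2)
    show (∑ i, ξ i * ξ i / ‖ξ‖^2 * h ‖ξ‖) = h ‖ξ‖
    rw [← Finset.sum_mul, ← Finset.sum_div]
    simp_rw [← sq]
    rw [← esp_norm_sq_eq, div_self hN, one_mul]
  have hdiag : ∀ i : Fin n, (∫ ξ : Esp n, ξ i * ξ i / ‖ξ‖^2 * h ‖ξ‖)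
      = (∫ ξ : Esp n, h ‖ξ‖) / n := by
    intro i
    have : ∑ j : Fin n, (∫ ξ : Esp n, ξ i * ξ i / ‖ξ‖^2 * h ‖ξ‖) = ∫ ξ : Esp n, h ‖ξ‖ := by
      rw [← hsum]
      exact Finset.sum_congr rfl fun j _ => hQswap i j
    rw [Finset.sum_const, Finset.card_univ, Fintype.card_fin, nsmul_eq_mul] at this
    have hn0 : (n:ℝ) ≠ 0 := by positivity
    rw [eq_div_iff hn0]
    linarith [this]
  -- expand the square
  have hpt : ∀ ξ : Esp n, (∑ j, ξ j * P j)^2 / ‖ξ‖^2 * h ‖ξ‖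
      = ∑ i, ∑ j, P i * P j * (ξ i * ξ j / ‖ξ‖^2 * h ‖ξ‖) := by
    intro ξ
    rw [sq, Finset.sum_mul_sum, Finset.sum_div, Finset.sum_mul]
    refine Finset.sum_congr rfl fun i _ => ?_
    rw [Finset.sum_div, Finset.sum_mul]
    exact Finset.sum_congr rfl fun j _ => by ring
  simp_rw [hpt]
  rw [integral_finset_sum _ (fun i _ => integrable_finset_sum _
    (fun j _ => (integrable_coord_mul n hint i j).const_mul _))]
  have : ∀ i : Fin n, ∫ ξ : Esp n, ∑ j, P i * P j * (ξ i * ξ j / ‖ξ‖^2 * h ‖ξ‖)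
      = ∑ j, P i * P j * ∫ ξ : Esp n, ξ i * ξ j / ‖ξ‖^2 * h ‖ξ‖ := by
    intro i
    rw [integral_finset_sum _ (fun j _ => (integrable_coord_mul n hint i j).const_mul _)]
    exact Finset.sum_congr rfl fun j _ => integral_const_mul _ _
  simp_rw [this]
  have hdiagsum : ∀ i : Fin n, ∑ j, P i * P j * (∫ ξ : Esp n, ξ i * ξ j / ‖ξ‖^2 * h ‖ξ‖)
      = P i ^ 2 * ((∫ ξ : Esp n, h ‖ξ‖) / n) := by
    intro i
    rw [Finset.sum_eq_single i]
    · rw [hdiag i]; ring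
    · intro j _ hji
      rw [hQ0 i j (Ne.symm hji), mul_zero]
    · intro hi
      exact absurd (Finset.mem_univ i) hi
  simp_rw [hdiagsum]
  rw [← Finset.sum_mul]
  have : ∑ i : Fin n, P i ^ 2 = ‖P‖^2 := (esp_norm_sq_eq n P).symm
  rw [this]
  ring

lemma integrable_gauss (n : ℕ) {b : ℝ} (hb : 0 < b) :
    Integrable (fun ξ : Esp n => Real.exp (-b * ‖ξ‖^2)) := by
  have h := GaussianFourier.integrable_cexp_neg_mul_sq_norm_add (V := Esp n)
    (b := (b:ℂ)) (by simpa using hb) 0 0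
  refine h.norm.congr (Eventually.of_forall fun v => ?_)
  show ‖Complex.exp _‖ = _
  rw [Complex.norm_exp]
  norm_num
  left
  norm_cast

lemma tendsto_L (n : ℕ) (hn : 1 ≤ n) {c : ℝ} (hc : 0 < c) :
    Tendsto (fun s : ℝ => ∫ y in Set.Ioi (0:ℝ),
      y ^ (n-1) • (Real.cos (s * y) * Real.exp (-c * y^2))) atTop (𝓝 0) := by
  set F : ℝ → ℝ := fun y => y ^ (n-1) * Real.exp (-c * y^2) with hF
  have hFint : IntegrableOn F (Set.Ioi 0) := by
    have h1 := integrableOn_rpow_mul_exp_neg_mul_sq hc (s := ((n:ℝ) - 1))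
      (by have : (1:ℝ) ≤ (n:ℝ) := by exact_mod_cast hn
          linarith)
    refine h1.congr_fun (fun x hx => ?_) measurableSet_Ioi
    rw [hF, show ((n:ℝ) - 1) = ((n - 1 : ℕ) : ℝ) by
      rw [Nat.cast_sub hn]; push_cast; ring]
    beta_reduce
    rw [Real.rpow_natCast]
  set g : ℝ → ℂ := fun v => ((Set.indicator (Set.Ioi 0) F v : ℝ) : ℂ) with hgdef
  have hg : Integrable g := ((integrable_indicator_iff measurableSet_Ioi).2 hFint).ofReal
  have hRL := Real.tendsto_integral_exp_smul_cocompact g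
  have hmap : Tendsto (fun s : ℝ => s / (2*π)) atTop (cocompact ℝ) := by
    have h1 : Tendsto (fun s : ℝ => s / (2*π)) atTop atTop :=
      tendsto_id.atTop_div_const (by positivity)
    refine h1.mono_right ?_
    rw [cocompact_eq_atBot_atTop]
    exact le_sup_right
  have hcomp := hRL.comp hmap
  have hre := (Complex.continuous_re.tendsto 0).comp hcomp
  simp only [Complex.zero_re] at hre
  refine hre.congr fun s => ?_
  show Complex.re (∫ v : ℝ, 𝐞 (-(v * (s / (2*π)))) • g v) = _
  have hgw : Integrable (fun v : ℝ => 𝐞 (-(v * (s / (2*π)))) • g v) := by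
    simpa [mul_comm _ (s / (2*π))] using (Real.fourierIntegral_convergent_iff (f := g) (s / (2*π))).2 hg
  have hcre := integral_re (μ := (volume : Measure ℝ)) hgw
  rw [RCLike.re_eq_complex_re] at hcre
  rw [← hcre]
  have hpt : ∀ v : ℝ, Complex.re (𝐞 (-(v * (s / (2*π)))) • g v)
      = Set.indicator (Set.Ioi 0) (fun y => y ^ (n-1) • (Real.cos (s * y) * Real.exp (-c * y^2))) v := by
    intro v
    by_cases hv : v ∈ Set.Ioi (0:ℝ)
    · rw [Set.indicator_of_mem hv]
      simp only [hgdef, Set.indicator_of_mem hv]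
      rw [Circle.smul_def, Real.fourierChar_apply] -- ensure form (may be no-op)
      rw [show 2*π*(-(v*(s/(2*π)))) = -(s*v) by field_simp]
      rw [smul_eq_mul, mul_comm (Complex.exp _) _, Complex.re_ofReal_mul, Complex.exp_ofReal_mul_I_re,
        Real.cos_neg]
      simp only [smul_eq_mul, hF]
      ring
    · rw [Set.indicator_of_notMem hv, hgdef]
      simp only [Set.indicator_of_notMem hv]
      simp
  rw [show (fun v => Complex.re (𝐞 (-(v * (s / (2*π)))) • g v))
    = Set.indicator (Set.Ioi 0) (fun y => y ^ (n-1) • (Real.cos (s * y) * Real.exp (-c * y^2)))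
    from funext hpt]
  rw [integral_indicator measurableSet_Ioi]

lemma tendsto_K0 (n : ℕ) (hn : 1 ≤ n) {c : ℝ} (hc : 0 < c) :
    Tendsto (fun s : ℝ => ∫ η : Esp n, Real.cos (s * ‖η‖) * Real.exp (-c * ‖η‖^2))
      atTop (𝓝 0) := by
  haveI : Nonempty (Fin n) := ⟨⟨0, hn⟩⟩
  have hd : Module.finrank ℝ (Esp n) = n := finrank_euclideanSpace_fin
  have hrad : ∀ s : ℝ, (∫ η : Esp n, Real.cos (s * ‖η‖) * Real.exp (-c * ‖η‖^2))
      = (Module.finrank ℝ (Esp n)) • (volume (Metric.ball (0:Esp n) 1)).toReal •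
        ∫ y in Set.Ioi (0:ℝ), y ^ (Module.finrank ℝ (Esp n) - 1) •
          (Real.cos (s*y) * Real.exp (-c*y^2)) := by
    intro s
    exact integral_fun_norm_addHaar (volume : Measure (Esp n))
      (fun r => Real.cos (s*r) * Real.exp (-c*r^2))
  have hL := (tendsto_L n hn hc).const_mul
    ((n : ℝ) * (volume (Metric.ball (0:Esp n) 1)).toReal)
  rw [mul_zero] at hL
  refine hL.congr fun s => ?_
  rw [hrad s, hd, nsmul_eq_mul, smul_eq_mul]
  ring

/-- two-sided bound of order `t^{-n/2}` for
`∫ (|ξ·P₀|²/|ξ|²) e^{-(α+β)|ξ|²t} cos²(γt|ξ|) dξ`. -/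
theorem stmt13
    (n : ℕ) (hn : 1 ≤ n) (α β γ : ℝ) (hα : 0 < α) (hβ : 0 ≤ β) (hγ : 0 < γ)
    (P₀ : Esp n) :
    ∃ C₃ > (0 : ℝ), ∃ T > (0 : ℝ), ∀ t : ℝ, T ≤ t →
      C₃ ^ 2 * ‖P₀‖ ^ 2 * t ^ (-(n : ℝ) / 2)
        ≤ (∫ ξ : Esp n, ((∑ j, ξ j * P₀ j) ^ 2 / ‖ξ‖ ^ 2)
            * Real.exp (-((α + β) * ‖ξ‖ ^ 2 * t)) * Real.cos (γ * t * ‖ξ‖) ^ 2)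
      ∧ (∫ ξ : Esp n, ((∑ j, ξ j * P₀ j) ^ 2 / ‖ξ‖ ^ 2)
            * Real.exp (-((α + β) * ‖ξ‖ ^ 2 * t)) * Real.cos (γ * t * ‖ξ‖) ^ 2)
          ≤ C₃⁻¹ ^ 2 * ‖P₀‖ ^ 2 * t ^ (-(n : ℝ) / 2) := by
  have hc : 0 < α + β := by linarith
  have hn1 : (1:ℝ) ≤ (n:ℝ) := by exact_mod_cast hn
  have hnpos : (0:ℝ) < (n:ℝ) := by linarith
  haveI : Nonempty (Fin n) := ⟨⟨0, hn⟩⟩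
  have hd : Module.finrank ℝ (Esp n) = n := finrank_euclideanSpace_fin
  set A : ℝ := (π / (α+β)) ^ ((n:ℝ)/2) with hA
  have hApos : 0 < A := Real.rpow_pos_of_pos (by positivity) _
  -- value of the Gaussian integral
  have hgauss : ∀ t : ℝ, 0 < t →
      (∫ ξ : Esp n, Real.exp (-((α+β)*t) * ‖ξ‖^2)) = A * t ^ (-(n:ℝ)/2) := by
    intro t ht
    rw [GaussianFourier.integral_rexp_neg_mul_sq_norm (by positivity), hd, hA]
    rw [show π / ((α+β)*t) = (π/(α+β)) * t⁻¹ by field_simp]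
    rw [Real.mul_rpow (by positivity) (by positivity), Real.inv_rpow ht.le,
      ← Real.rpow_neg ht.le, neg_div]
  -- the limiting oscillatory integral
  set K₀ : ℝ → ℝ := fun s => ∫ η : Esp n, Real.cos (s * ‖η‖) * Real.exp (-(α+β) * ‖η‖^2)
    with hK₀def
  have hK0 : Tendsto K₀ atTop (𝓝 0) := tendsto_K0 n hn hc
  obtain ⟨S, hS⟩ : ∃ S : ℝ, ∀ s ≥ S, |K₀ s| ≤ A/2 := by
    have h2 : ∀ᶠ s in atTop, ‖K₀ s‖ < A/2 :=
      (NormedAddCommGroup.tendsto_nhds_zero.mp hK0) (A/2) (by positivity)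
    obtain ⟨S, hS⟩ := eventually_atTop.mp h2
    exact ⟨S, fun s hs => le_of_lt (by simpa using hS s hs)⟩
  set T : ℝ := max 1 ((S / (2*γ))^2) with hT
  have hT1 : (1:ℝ) ≤ T := le_max_left _ _
  have hTpos : (0:ℝ) < T := lt_of_lt_of_le one_pos hT1
  refine ⟨min (Real.sqrt (A/(4*(n:ℝ)))) (Real.sqrt ((A/(n:ℝ))⁻¹)), ?_, T, hTpos, ?_⟩
  · apply lt_min <;> apply Real.sqrt_pos.mpr <;> positivity
  set C₃ : ℝ := min (Real.sqrt (A/(4*(n:ℝ)))) (Real.sqrt ((A/(n:ℝ))⁻¹)) with hC₃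
  have hC₃pos : 0 < C₃ := by
    apply lt_min <;> apply Real.sqrt_pos.mpr <;> positivity
  have hC1 : C₃^2 ≤ A/(4*(n:ℝ)) := by
    have h1 : C₃ ≤ Real.sqrt (A/(4*(n:ℝ))) := min_le_left _ _
    calc C₃^2 ≤ (Real.sqrt (A/(4*(n:ℝ))))^2 := by
          exact pow_le_pow_left₀ hC₃pos.le h1 2
      _ = A/(4*(n:ℝ)) := Real.sq_sqrt (by positivity)
  have hC2 : C₃^2 ≤ (A/(n:ℝ))⁻¹ := by
    have h1 : C₃ ≤ Real.sqrt ((A/(n:ℝ))⁻¹) := min_le_right _ _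
    calc C₃^2 ≤ (Real.sqrt ((A/(n:ℝ))⁻¹))^2 := by
          exact pow_le_pow_left₀ hC₃pos.le h1 2
      _ = (A/(n:ℝ))⁻¹ := Real.sq_sqrt (by positivity)
  intro t htT
  have ht : (0:ℝ) < t := lt_of_lt_of_le hTpos htT
  have htp : 0 < t ^ (-(n:ℝ)/2) := Real.rpow_pos_of_pos ht _
  -- 2γ√t is eventually ≥ S
  have hst : S ≤ 2*γ*Real.sqrt t := by
    have h1 : (S/(2*γ))^2 ≤ t := le_trans (le_max_right _ _) htT
    have h2 : S/(2*γ) ≤ Real.sqrt t := by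
      calc S/(2*γ) ≤ |S/(2*γ)| := le_abs_self _
        _ = Real.sqrt ((S/(2*γ))^2) := (Real.sqrt_sq_eq_abs _).symm
        _ ≤ Real.sqrt t := Real.sqrt_le_sqrt h1
    calc S = (S/(2*γ)) * (2*γ) := by field_simp
      _ ≤ Real.sqrt t * (2*γ) := by
          apply mul_le_mul_of_nonneg_right h2 (by positivity)
      _ = 2*γ*Real.sqrt t := by ring
  -- integrabilities
  have hIg : Integrable (fun ξ : Esp n => Real.exp (-((α+β)*t) * ‖ξ‖^2)) :=
    integrable_gauss n (by positivity)
  have hIcos : Integrable (fun ξ : Esp n =>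
      Real.cos (2*(γ*t*‖ξ‖)) * Real.exp (-((α+β)*t) * ‖ξ‖^2)) := by
    refine hIg.bdd_mul (c := 1) ?_ (Eventually.of_forall fun ξ => by
      rw [Real.norm_eq_abs]; exact Real.abs_cos_le_one _)
    apply Measurable.aestronglyMeasurable
    fun_prop
  have hIJ : Integrable (fun ξ : Esp n =>
      Real.exp (-((α+β)*t) * ‖ξ‖^2) * Real.cos (γ*t*‖ξ‖)^2) := by
    have h1 : Integrable (fun ξ : Esp n =>
        Real.cos (γ*t*‖ξ‖)^2 * Real.exp (-((α+β)*t) * ‖ξ‖^2)) := by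
      refine hIg.bdd_mul (c := 1) ?_ (Eventually.of_forall fun ξ => by
        rw [Real.norm_eq_abs, abs_of_nonneg (sq_nonneg _)]
        exact Real.cos_sq_le_one _)
      apply Measurable.aestronglyMeasurable
      fun_prop
    exact h1.congr (Eventually.of_forall fun ξ => mul_comm _ _)
  -- scaling identity for the oscillatory part
  have hKeq : (∫ ξ : Esp n, Real.cos (2*(γ*t*‖ξ‖)) * Real.exp (-((α+β)*t) * ‖ξ‖^2))
      = t ^ (-(n:ℝ)/2) * K₀ (2*γ*Real.sqrt t) := by
    have hs0 : (0:ℝ) < Real.sqrt t := Real.sqrt_pos.mpr ht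
    have hcomp := Measure.integral_comp_inv_smul_of_nonneg (volume : Measure (Esp n))
      (fun ξ : Esp n => Real.cos (2*(γ*t*‖ξ‖)) * Real.exp (-((α+β)*t) * ‖ξ‖^2))
      (Real.sqrt_nonneg t)
    have hpt : ∀ x : Esp n,
        Real.cos (2*(γ*t*‖(Real.sqrt t)⁻¹ • x‖)) *
          Real.exp (-((α+β)*t) * ‖(Real.sqrt t)⁻¹ • x‖^2)
        = Real.cos ((2*γ*Real.sqrt t) * ‖x‖) * Real.exp (-(α+β) * ‖x‖^2) := by
      intro x
      have hnrm : ‖(Real.sqrt t)⁻¹ • x‖ = (Real.sqrt t)⁻¹ * ‖x‖ := by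
        rw [norm_smul, Real.norm_eq_abs, abs_of_pos (by positivity)]
      rw [hnrm]
      have hss : Real.sqrt t * Real.sqrt t = t := Real.mul_self_sqrt ht.le
      congr 1
      · congr 1
        field_simp
        linear_combination (-‖x‖)*hss
      · congr 1
        have : ((Real.sqrt t)⁻¹ * ‖x‖)^2 = ‖x‖^2 / t := by
          rw [mul_pow]
          rw [show (Real.sqrt t)⁻¹^2 = t⁻¹ by
            rw [← Real.sqrt_inv]
            exact Real.sq_sqrt (by positivity)]
          ring
        rw [this]
        field_simp
    rw [show (fun x : Esp n => Real.cos (2*(γ*t*‖(Real.sqrt t)⁻¹ • x‖)) *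
          Real.exp (-((α+β)*t) * ‖(Real.sqrt t)⁻¹ • x‖^2))
        = fun x : Esp n => Real.cos ((2*γ*Real.sqrt t) * ‖x‖) * Real.exp (-(α+β) * ‖x‖^2)
        from funext hpt] at hcomp
    rw [hd, smul_eq_mul] at hcomp
    have hpow : (Real.sqrt t)^n = t ^ ((n:ℝ)/2) := by
      rw [Real.sqrt_eq_rpow, ← Real.rpow_natCast (t ^ ((1:ℝ)/2)) n, ← Real.rpow_mul ht.le]
      congr 1
      ring
    have : K₀ (2*γ*Real.sqrt t) = t ^ ((n:ℝ)/2) *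
        ∫ ξ : Esp n, Real.cos (2*(γ*t*‖ξ‖)) * Real.exp (-((α+β)*t) * ‖ξ‖^2) := by
      rw [hK₀def]
      simp only []
      rw [← hpow, hcomp]
    rw [this]
    rw [← mul_assoc, ← Real.rpow_add ht]
    rw [show -(n:ℝ)/2 + (n:ℝ)/2 = 0 by ring, Real.rpow_zero, one_mul]
  -- J's value and bounds
  have hJeq : (∫ ξ : Esp n, Real.exp (-((α+β)*t) * ‖ξ‖^2) * Real.cos (γ*t*‖ξ‖)^2)
      = (1/2) * (A * t ^ (-(n:ℝ)/2)) + (1/2) * (t ^ (-(n:ℝ)/2) * K₀ (2*γ*Real.sqrt t)) := by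
    have hsplit : ∀ ξ : Esp n, Real.exp (-((α+β)*t) * ‖ξ‖^2) * Real.cos (γ*t*‖ξ‖)^2
        = (1/2) * Real.exp (-((α+β)*t) * ‖ξ‖^2)
          + (1/2) * (Real.cos (2*(γ*t*‖ξ‖)) * Real.exp (-((α+β)*t) * ‖ξ‖^2)) := by
      intro ξ
      rw [Real.cos_sq]
      ring
    rw [show (fun ξ : Esp n => Real.exp (-((α+β)*t) * ‖ξ‖^2) * Real.cos (γ*t*‖ξ‖)^2)
        = fun ξ : Esp n => (1/2) * Real.exp (-((α+β)*t) * ‖ξ‖^2)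
          + (1/2) * (Real.cos (2*(γ*t*‖ξ‖)) * Real.exp (-((α+β)*t) * ‖ξ‖^2))
        from funext hsplit]
    rw [integral_add (hIg.const_mul _) (hIcos.const_mul _),
      integral_const_mul, integral_const_mul, hgauss t ht, hKeq]
  -- identification of the main integral
  have hmain : (∫ ξ : Esp n, ((∑ j, ξ j * P₀ j) ^ 2 / ‖ξ‖ ^ 2)
        * Real.exp (-((α + β) * ‖ξ‖ ^ 2 * t)) * Real.cos (γ * t * ‖ξ‖) ^ 2)
      = (‖P₀‖^2 / n) *
        ∫ ξ : Esp n, Real.exp (-((α+β)*t) * ‖ξ‖^2) * Real.cos (γ*t*‖ξ‖)^2 := by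
    have hhint : Integrable (fun ξ : Esp n =>
        (fun r : ℝ => Real.exp (-((α+β)*t) * r^2) * Real.cos (γ*t*r)^2) ‖ξ‖) := hIJ
    have hsym := sym_lemma n hn
      (fun r : ℝ => Real.exp (-((α+β)*t) * r^2) * Real.cos (γ*t*r)^2) hhint P₀
    rw [show (fun ξ : Esp n => ((∑ j, ξ j * P₀ j) ^ 2 / ‖ξ‖ ^ 2)
        * Real.exp (-((α + β) * ‖ξ‖ ^ 2 * t)) * Real.cos (γ * t * ‖ξ‖) ^ 2)
        = fun ξ : Esp n => (∑ j, ξ j * P₀ j)^2 / ‖ξ‖^2 *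
          ((fun r : ℝ => Real.exp (-((α+β)*t) * r^2) * Real.cos (γ*t*r)^2) ‖ξ‖) from
      funext fun ξ => by
        simp only []
        rw [mul_assoc]
        congr 2
        ring_nf]
    rw [hsym]
  rw [hmain]
  -- bounds on J
  have habs := abs_le.mp (hS _ hst)
  have hJlow : A/4 * t ^ (-(n:ℝ)/2)
      ≤ ∫ ξ : Esp n, Real.exp (-((α+β)*t) * ‖ξ‖^2) * Real.cos (γ*t*‖ξ‖)^2 := by
    rw [hJeq]
    nlinarith [habs.1, htp, hApos]
  have hJup : (∫ ξ : Esp n, Real.exp (-((α+β)*t) * ‖ξ‖^2) * Real.cos (γ*t*‖ξ‖)^2)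
      ≤ A * t ^ (-(n:ℝ)/2) := by
    rw [← hgauss t ht]
    refine integral_mono hIJ hIg fun ξ => ?_
    exact mul_le_of_le_one_right (Real.exp_nonneg _) (Real.cos_sq_le_one _)
  constructor
  · calc C₃ ^ 2 * ‖P₀‖ ^ 2 * t ^ (-(n:ℝ)/2)
        ≤ (A/(4*(n:ℝ))) * ‖P₀‖ ^ 2 * t ^ (-(n:ℝ)/2) := by
          apply mul_le_mul_of_nonneg_right _ htp.le
          exact mul_le_mul_of_nonneg_right hC1 (sq_nonneg _)
      _ = (‖P₀‖^2 / n) * (A/4 * t ^ (-(n:ℝ)/2)) := by ring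
      _ ≤ (‖P₀‖^2 / n) * ∫ ξ : Esp n,
            Real.exp (-((α+β)*t) * ‖ξ‖^2) * Real.cos (γ*t*‖ξ‖)^2 := by
          exact mul_le_mul_of_nonneg_left hJlow (by positivity)
  · have hinv : A/(n:ℝ) ≤ C₃⁻¹^2 := by
      rw [inv_pow]
      calc A/(n:ℝ) = ((A/(n:ℝ))⁻¹)⁻¹ := (inv_inv _).symm
        _ ≤ (C₃^2)⁻¹ := by
            apply inv_anti₀ (by positivity) hC2
    calc (‖P₀‖^2 / n) * ∫ ξ : Esp n,
          Real.exp (-((α+β)*t) * ‖ξ‖^2) * Real.cos (γ*t*‖ξ‖)^2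
        ≤ (‖P₀‖^2 / n) * (A * t ^ (-(n:ℝ)/2)) :=
          mul_le_mul_of_nonneg_left hJup (by positivity)
      _ = (A/(n:ℝ)) * ‖P₀‖^2 * t ^ (-(n:ℝ)/2) := by ring
      _ ≤ C₃⁻¹^2 * ‖P₀‖^2 * t ^ (-(n:ℝ)/2) := by
          apply mul_le_mul_of_nonneg_right _ htp.le
          exact mul_le_mul_of_nonneg_right hinv (sq_nonneg _)
end
end

section
/- Let n ≥ 1, α > 0, β ≥ 0, γ > 0 and set I(t) := ∫_{ℝⁿ} e^{−(α+β)|ξ|²t} sin²(γ t |ξ|) dξ. Then lim_{t→∞} t^{n/2} I(t) = (σ_{n−1}/2) (α+β)^{−n/2} S₀, where σ_{n−1} is the surface measure of the unit sphere in ℝⁿ and S₀ := ∫_0^∞ e^{−θ²} θ^{n−1} dθ. -/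
open MeasureTheory Real Filter
open FourierTransform Topology

noncomputable section

/-- The surface measure `σ_{n-1}` of the unit sphere in `ℝⁿ`, expressed by the standard
identity `σ_{n-1} = n · vol(B(0,1))`. -/
def sphereSurface (n : ℕ) : ℝ :=
  n * (volume (Metric.ball (0 : Esp n) 1)).toReal

lemma cosRL {g : ℝ → ℝ} (hg : Integrable g) :
    Tendsto (fun w : ℝ => ∫ v : ℝ, Real.cos (2 * π * (v * w)) * g v) atTop (𝓝 0) := by
  have h := Real.tendsto_integral_exp_smul_cocompact (fun v : ℝ => (g v : ℂ))
  have h1 : Tendsto (fun w : ℝ => ∫ v : ℝ, 𝐞 (-(v * w)) • (g v : ℂ)) atTop (𝓝 0) :=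
    h.mono_left (by rw [cocompact_eq_atBot_atTop]; exact le_sup_right)
  have h2 := (Complex.continuous_re.tendsto 0).comp h1
  simp only [Complex.zero_re] at h2
  refine h2.congr fun w => ?_
  have hint : Integrable (fun v : ℝ => 𝐞 (-(v * w)) • (g v : ℂ)) := by
    have := (Real.fourierIntegral_convergent_iff (f := fun v : ℝ => (g v : ℂ)) w).2 hg.ofReal
    simpa [RCLike.inner_apply, starRingEnd_apply, mul_comm w] using this
  have := integral_re hint
  simp only [RCLike.re_to_complex] at this
  simp only [Function.comp] at *
  rw [← this]
  apply integral_congr_ae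
  filter_upwards with v
  simp only [Circle.smul_def, Real.fourierChar_apply, Complex.mul_re, Complex.ofReal_re,
    Complex.ofReal_im, mul_zero, sub_zero, Complex.exp_ofReal_mul_I_re, mul_neg, Real.cos_neg,
    smul_eq_mul]

/-- `t^{n/2} ∫ e^{-(α+β)|ξ|²t} sin²(γt|ξ|) dξ → (σ_{n-1}/2)(α+β)^{-n/2} S₀`
as `t → ∞`, where `S₀ = ∫_0^∞ e^{-θ²} θ^{n-1} dθ`. -/
theorem stmt14
    (n : ℕ) (hn : 1 ≤ n) (α β γ : ℝ) (hα : 0 < α) (hβ : 0 ≤ β) (hγ : 0 < γ) :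
    Filter.Tendsto
      (fun t : ℝ => t ^ ((n : ℝ) / 2) *
        ∫ ξ : Esp n, Real.exp (-((α + β) * ‖ξ‖ ^ 2 * t)) * Real.sin (γ * t * ‖ξ‖) ^ 2)
      Filter.atTop
      (nhds ((sphereSurface n / 2) * (α + β) ^ (-(n : ℝ) / 2)
        * ∫ θ in Set.Ioi (0 : ℝ), Real.exp (-θ ^ 2) * θ ^ (n - 1))) := by
  have hc : (0:ℝ) < α + β := by linarith
  haveI : Nontrivial (Esp n) := by
    have h : 0 < Module.finrank ℝ (Esp n) := by rw [finrank_euclideanSpace_fin]; omega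
    exact Module.nontrivial_of_finrank_pos h
  -- base integrable function
  have hG : Integrable (fun r : ℝ => r ^ (n-1) * Real.exp (-((α+β) * r^2))) := by
    have hs : (-1:ℝ) < ((n-1 : ℕ) : ℝ) := lt_of_lt_of_le (by norm_num) (Nat.cast_nonneg _)
    have h := integrable_rpow_mul_exp_neg_mul_sq hc hs
    refine h.congr (Eventually.of_forall fun x => ?_)
    simp only [Real.rpow_natCast, neg_mul]
  have hCint : ∀ k : ℝ, Integrable
      (fun y : ℝ => Real.cos (k*y) * (y^(n-1) * Real.exp (-((α+β)*y^2)))) := by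
    intro k
    apply hG.bdd_mul ((Real.continuous_cos.comp (continuous_const.mul continuous_id)).aestronglyMeasurable)
    exact ae_of_all _ (fun y => by rw [Real.norm_eq_abs]; exact Real.abs_cos_le_one _ : ∀ y : ℝ, ‖Real.cos (k*y)‖ ≤ 1)
  set S₀ : ℝ := ∫ θ in Set.Ioi (0 : ℝ), Real.exp (-θ ^ 2) * θ ^ (n - 1) with hS₀
  set A : ℝ := ∫ r in Set.Ioi (0:ℝ), r ^ (n-1) * Real.exp (-((α+β) * r^2)) with hAdef
  set Cf : ℝ → ℝ := fun k => ∫ r in Set.Ioi (0:ℝ),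
      Real.cos (k*r) * (r^(n-1) * Real.exp (-((α+β)*r^2))) with hCdef
  -- value of A
  have hA : A = (α+β) ^ (-(n:ℝ)/2) * S₀ := by
    set q := Real.sqrt (α+β) with hq
    have hq0 : 0 < q := Real.sqrt_pos.2 hc
    have key := integral_comp_mul_left_Ioi (fun θ : ℝ => Real.exp (-θ^2) * θ^(n-1)) 0 hq0
    rw [mul_zero] at key
    have lhs : (fun x : ℝ => Real.exp (-(q*x)^2) * (q*x)^(n-1))
        = fun x : ℝ => q^(n-1) * (x^(n-1) * Real.exp (-((α+β)*x^2))) := by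
      funext x
      have h2 : (q*x)^2 = (α+β) * x^2 := by rw [mul_pow, hq, Real.sq_sqrt hc.le]
      rw [h2, mul_pow]; ring
    simp only [lhs] at key
    rw [MeasureTheory.integral_const_mul, smul_eq_mul] at key
    have hqpow : (α+β) ^ (-(n:ℝ)/2) = (q ^ n)⁻¹ := by
      rw [hq, Real.sqrt_eq_rpow, ← Real.rpow_natCast ((α+β) ^ ((1:ℝ)/2)) n,
        ← Real.rpow_mul hc.le, ← Real.rpow_neg hc.le]
      congr 1; ring
    have hqn : q ^ n = q^(n-1) * q := by rw [← pow_succ, Nat.sub_add_cancel hn]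
    have hne : q^(n-1) ≠ 0 := pow_ne_zero _ hq0.ne'
    rw [hqpow, hqn, mul_inv, mul_assoc, ← key, inv_mul_cancel_left₀ hne]
  -- cosine term tends to zero
  have hC0 : Tendsto (fun t : ℝ => Cf (2*(γ*Real.sqrt t))) atTop (𝓝 0) := by
    set g : ℝ → ℝ := (Set.Ioi (0:ℝ)).indicator
        (fun r => r^(n-1) * Real.exp (-((α+β)*r^2))) with hgdef
    have hgint : Integrable g := (integrable_indicator_iff measurableSet_Ioi).2 hG.integrableOn
    have hRL := cosRL hgint
    have hw : Tendsto (fun t : ℝ => γ * Real.sqrt t / π) atTop atTop := by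
      apply Tendsto.atTop_div_const Real.pi_pos
      have hsqrt : Tendsto Real.sqrt atTop atTop := by
        refine (tendsto_rpow_atTop (by norm_num : (0:ℝ) < 1/2)).congr' ?_
        filter_upwards [eventually_ge_atTop (0:ℝ)] with x hx
        exact (Real.sqrt_eq_rpow x).symm
      exact hsqrt.const_mul_atTop hγ
    have hcomp := hRL.comp hw
    refine hcomp.congr fun t => ?_
    show ∫ v : ℝ, Real.cos (2 * π * (v * (γ * Real.sqrt t / π))) * g v = _
    rw [hCdef]
    simp only
    rw [← integral_indicator measurableSet_Ioi]
    apply integral_congr_ae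
    filter_upwards with v
    by_cases hv : v ∈ Set.Ioi (0:ℝ)
    · rw [hgdef]
      simp only [Set.indicator_of_mem hv]
      congr 2
      field_simp
    · rw [hgdef]; simp [Set.indicator_of_notMem hv]
  -- main eventual identity
  have hmain : ∀ᶠ t in atTop, t ^ ((n:ℝ)/2) *
      (∫ ξ : Esp n, Real.exp (-((α+β)*‖ξ‖^2*t)) * Real.sin (γ*t*‖ξ‖)^2)
      = sphereSurface n * (A/2 - Cf (2*(γ*Real.sqrt t))/2) := by
    filter_upwards [eventually_gt_atTop (0:ℝ)] with t ht
    have hst : 0 < Real.sqrt t := Real.sqrt_pos.2 ht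
    have hts : t = Real.sqrt t ^ 2 := (Real.sq_sqrt ht.le).symm
    -- step 1 : scaling
    have step1 : (∫ ξ : Esp n, Real.exp (-((α+β)*‖ξ‖^2)) * Real.sin (γ*Real.sqrt t*‖ξ‖)^2)
        = t ^ ((n:ℝ)/2) *
          ∫ ξ : Esp n, Real.exp (-((α+β)*‖ξ‖^2*t)) * Real.sin (γ*t*‖ξ‖)^2 := by
      have hcs := MeasureTheory.Measure.integral_comp_smul_of_nonneg (volume : Measure (Esp n))
        (fun ξ : Esp n => Real.exp (-((α+β)*‖ξ‖^2*t)) * Real.sin (γ*t*‖ξ‖)^2)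
        ((Real.sqrt t)⁻¹) (hR := by positivity)
      rw [finrank_euclideanSpace_fin] at hcs
      have key : ∀ x : Esp n,
          Real.exp (-((α+β)*‖(Real.sqrt t)⁻¹ • x‖^2*t)) * Real.sin (γ*t*‖(Real.sqrt t)⁻¹ • x‖)^2
          = Real.exp (-((α+β)*‖x‖^2)) * Real.sin (γ*Real.sqrt t*‖x‖)^2 := by
        intro x
        have hnorm : ‖(Real.sqrt t)⁻¹ • x‖ = (Real.sqrt t)⁻¹ * ‖x‖ := by
          rw [norm_smul, Real.norm_eq_abs, abs_of_nonneg (by positivity)]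
        rw [hnorm]
        have hsq : Real.sqrt t ^ 2 = t := Real.sq_sqrt ht.le
        have e1 : (α+β)*((Real.sqrt t)⁻¹*‖x‖)^2*t = (α+β)*‖x‖^2 := by
          rw [mul_pow, inv_pow, hsq]
          field_simp
        have e2 : γ*t*((Real.sqrt t)⁻¹*‖x‖) = γ*Real.sqrt t*‖x‖ := by
          have hd : t * (Real.sqrt t)⁻¹ = Real.sqrt t := by
            rw [← div_eq_mul_inv, Real.div_sqrt]
          calc γ*t*((Real.sqrt t)⁻¹*‖x‖) = γ * (t * (Real.sqrt t)⁻¹) * ‖x‖ := by ring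
            _ = _ := by rw [hd]
        rw [e1, e2]
      simp only [key] at hcs
      have hpow : (((Real.sqrt t)⁻¹)^n)⁻¹ = t ^ ((n:ℝ)/2) := by
        rw [inv_pow, inv_inv, Real.sqrt_eq_rpow, ← Real.rpow_natCast (t ^ ((1:ℝ)/2)) n,
          ← Real.rpow_mul ht.le, one_div, inv_mul_eq_div]
      rw [hpow, smul_eq_mul] at hcs
      exact hcs
    -- step 2 : polar coordinates
    have step2 := MeasureTheory.integral_fun_norm_addHaar (volume : Measure (Esp n))
        (fun r : ℝ => Real.exp (-((α+β)*r^2)) * Real.sin (γ*Real.sqrt t*r)^2)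
    rw [finrank_euclideanSpace_fin] at step2
    -- splitting
    have split : (∫ y in Set.Ioi (0:ℝ),
          y^(n-1) • (Real.exp (-((α+β)*y^2)) * Real.sin (γ*Real.sqrt t*y)^2))
        = A/2 - Cf (2*(γ*Real.sqrt t))/2 := by
      have hptw : ∀ y : ℝ, y^(n-1) • (Real.exp (-((α+β)*y^2)) * Real.sin (γ*Real.sqrt t*y)^2)
          = y^(n-1) * Real.exp (-((α+β)*y^2)) / 2
            - Real.cos ((2*(γ*Real.sqrt t))*y) * (y^(n-1) * Real.exp (-((α+β)*y^2))) / 2 := by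
        intro y
        rw [smul_eq_mul, Real.sin_sq_eq_half_sub]
        have h3 : 2*(γ*Real.sqrt t*y) = (2*(γ*Real.sqrt t))*y := by ring
        rw [h3]; ring
      simp_rw [hptw]
      rw [integral_sub ((hG.div_const 2).integrableOn)
        (((hCint (2*(γ*Real.sqrt t))).div_const 2).integrableOn),
        integral_div, integral_div]
    rw [← step1, step2, nsmul_eq_mul, smul_eq_mul, split, sphereSurface, measureReal_def]
    ring
  -- final assembly
  have htend := ((tendsto_const_nhds (x := A/2)).sub (hC0.div_const 2)).const_mul (sphereSurface n)
  have hval : sphereSurface n / 2 * (α+β) ^ (-(n:ℝ)/2) * S₀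
      = sphereSurface n * (A/2 - 0/2) := by rw [hA]; ring
  rw [hval]
  exact htend.congr' (hmain.mono fun t h => h.symm)
end
end
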